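/- arXiv:1002.0702 — 7 statements merged into one kernel-verified Lean document; each statement's English description precedes it below -/
import Mathlib

section
/- Let ν be a nonzero non-negative Radon measure on (0,∞) which integrates x ↦ y^x for all sufficiently small y > 0, and let m₀ = inf supp ν. Then the limit as y → 0⁺ of (∫ x y^x dν(x)) / (∫ y^x dν(x)) equals m₀. -/
open MeasureTheory Set Filter Topology

section helpers
lemma aux_continuous_rpow (y : ℝ) (hy : 0 < y) : Continuous (fun x : ℝ => y ^ x) := by
  have h : (fun x : ℝ => y ^ x) = fun x => Real.exp (Real.log y * x) :=
    funext fun x => Real.rpow_def_of_pos hy x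
  rw [h]
  exact Real.continuous_exp.comp (continuous_const.mul continuous_id)

lemma aux_int_mul (ν : Measure ℝ) (y y₂ : ℝ) (h0 : 0 < y) (hlt : y < y₂)
    (h2 : Integrable (fun x : ℝ => y₂ ^ x) ν) (hae : ∀ᵐ x ∂ν, 0 < x) :
    Integrable (fun x : ℝ => x * y ^ x) ν := by
  have h20 : 0 < y₂ := h0.trans hlt
  set δ : ℝ := Real.log (y₂ / y) with hδdef
  have hδ : 0 < δ := Real.log_pos (by rw [lt_div_iff₀ h0]; linarith)
  refine (h2.const_mul (1/δ)).mono' ?_ ?_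
  · exact ((continuous_id.mul (aux_continuous_rpow y h0)).aestronglyMeasurable)
  · filter_upwards [hae] with x hx
    have hyx : (0:ℝ) < y ^ x := Real.rpow_pos_of_pos h0 x
    have hxle : x ≤ Real.exp (δ * x) / δ := by
      rw [le_div_iff₀ hδ]
      nlinarith [Real.add_one_le_exp (δ * x)]
    have key : Real.exp (δ * x) * y ^ x = y₂ ^ x := by
      have h1 : (y₂ / y) ^ x = Real.exp (δ * x) := by
        rw [Real.rpow_def_of_pos (div_pos h20 h0)]
      rw [← h1, ← Real.mul_rpow (le_of_lt (div_pos h20 h0)) h0.le,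
        div_mul_cancel₀ _ (ne_of_gt h0)]
    rw [Real.norm_eq_abs, abs_of_nonneg (by positivity)]
    calc x * y ^ x ≤ (Real.exp (δ * x) / δ) * y ^ x :=
          mul_le_mul_of_nonneg_right hxle hyx.le
      _ = 1/δ * (Real.exp (δ * x) * y ^ x) := by ring
      _ = 1/δ * y₂ ^ x := by rw [key]

lemma aux_Iic_lt_top (ν : Measure ℝ) (y₁ : ℝ) (h0 : 0 < y₁) (h1 : y₁ < 1)
    (hint : Integrable (fun x : ℝ => y₁ ^ x) ν) (A : ℝ) : ν (Iic A) < ⊤ := by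
  have hmeas : AEMeasurable (fun x : ℝ => (‖y₁ ^ x‖₊ : ENNReal)) ν :=
    hint.aestronglyMeasurable.aemeasurable.nnnorm.coe_nnreal_ennreal
  set ε : ENNReal := ENNReal.ofReal (y₁ ^ A) with hε
  have hε0 : ε ≠ 0 := by
    simp only [hε, ne_eq, ENNReal.ofReal_eq_zero, not_le]
    exact Real.rpow_pos_of_pos h0 A
  have hsub : Iic A ⊆ {x : ℝ | ε ≤ (‖y₁ ^ x‖₊ : ENNReal)} := by
    intro x hx
    have h2 : y₁ ^ A ≤ y₁ ^ x := Real.rpow_le_rpow_of_exponent_ge h0 h1.le hx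
    show ε ≤ ‖y₁ ^ x‖ₑ
    rw [Real.enorm_eq_ofReal (Real.rpow_pos_of_pos h0 x).le]
    exact ENNReal.ofReal_le_ofReal h2
  have hmark := mul_meas_ge_le_lintegral₀ hmeas ε
  have hfin : ∫⁻ a, (‖y₁ ^ a‖₊ : ENNReal) ∂ν < ⊤ := hint.2
  calc ν (Iic A) ≤ ν {x : ℝ | ε ≤ (‖y₁ ^ x‖₊ : ENNReal)} := measure_mono hsub
    _ ≤ (∫⁻ a, (‖y₁ ^ a‖₊ : ENNReal) ∂ν) / ε := by
        rw [ENNReal.le_div_iff_mul_le (Or.inl hε0) (Or.inr hfin.ne), mul_comm]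
        exact hmark
    _ < ⊤ := ENNReal.div_lt_top hfin.ne hε0

lemma aux_compl_null (ν : Measure ℝ) :
    ν {x : ℝ | ∀ ε > 0, ν (Set.Ioo (x - ε) (x + ε)) ≠ 0}ᶜ = 0 := by
  set S := {x : ℝ | ∀ ε > 0, ν (Set.Ioo (x - ε) (x + ε)) ≠ 0} with hS
  have hch : ∀ i : ↥Sᶜ, ∃ ε : ℝ, 0 < ε ∧ ν (Set.Ioo ((i:ℝ) - ε) ((i:ℝ) + ε)) = 0 := by
    rintro ⟨x, hx⟩
    simp only [hS, mem_compl_iff, mem_setOf_eq] at hx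
    push_neg at hx
    obtain ⟨ε, hε0, hεn⟩ := hx
    exact ⟨ε, hε0, hεn⟩
  choose ε hε0 hεnull using hch
  set s : ↥Sᶜ → Set ℝ := fun i => Set.Ioo ((i:ℝ) - ε i) ((i:ℝ) + ε i) with hs
  obtain ⟨T, hTc, hTU⟩ := TopologicalSpace.isOpen_iUnion_countable s (fun i => isOpen_Ioo)
  have hnull : ν (⋃ i, s i) = 0 := by
    rw [← hTU]
    exact (measure_biUnion_null_iff hTc).mpr (fun i _ => hεnull i)
  refine measure_mono_null (fun x hx => ?_) hnull
  exact mem_iUnion.mpr ⟨⟨x, hx⟩, by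
    simp only [hs, mem_Ioo]
    constructor <;> [linarith [hε0 ⟨x, hx⟩]; linarith [hε0 ⟨x, hx⟩]]⟩
end helpers

/-- For a nonzero non-negative Radon measure ν on (0,∞) integrating
`x ↦ y^x` for small `y > 0`, the ratio `(∫ x y^x dν)/(∫ y^x dν)` tends to
`m₀ = inf supp ν` as `y → 0⁺`. -/
theorem stmt_0 (ν : Measure ℝ) (hν : ν ≠ 0)
    (hsupp : ν (Set.Iic (0:ℝ)) = 0)
    (y₀ : ℝ) (hy₀ : y₀ ∈ Set.Ioo (0:ℝ) 1)
    (hint : ∀ y ∈ Set.Ioo (0:ℝ) y₀, Integrable (fun x : ℝ => y ^ x) ν)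
    (m₀ : ℝ)
    (hm₀ : m₀ = sInf {x : ℝ | ∀ ε > 0, ν (Set.Ioo (x - ε) (x + ε)) ≠ 0}) :
    Tendsto (fun y : ℝ => (∫ x, x * y ^ x ∂ν) / (∫ x, y ^ x ∂ν))
      (𝓝[>] (0:ℝ)) (𝓝 m₀) := by
  obtain ⟨hy₀0, hy₀1⟩ := hy₀
  set S := {x : ℝ | ∀ ε > 0, ν (Set.Ioo (x - ε) (x + ε)) ≠ 0} with hSdef
  have hcompl : ν Sᶜ = 0 := aux_compl_null ν
  -- S nonempty
  have hSne : S.Nonempty := by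
    by_contra h
    rw [not_nonempty_iff_eq_empty] at h
    apply hν
    rw [← Measure.measure_univ_eq_zero]
    have huniv : (univ : Set ℝ) = Sᶜ := by rw [h]; simp
    rw [huniv]; exact hcompl
  -- S ⊆ [0, ∞)
  have hSsub : S ⊆ Ici 0 := by
    intro x hx
    by_contra hx0
    simp only [mem_Ici, not_le] at hx0
    refine hx (-x) (by linarith) (measure_mono_null ?_ hsupp)
    intro z hz
    simp only [mem_Ioo] at hz
    simp only [mem_Iic]
    linarith [hz.2]
  have hSbdd : BddBelow S := ⟨0, hSsub⟩
  -- S closed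
  have hScl : IsClosed S := by
    rw [← isOpen_compl_iff, Metric.isOpen_iff]
    intro x hx
    simp only [hSdef, mem_compl_iff, mem_setOf_eq] at hx
    push_neg at hx
    obtain ⟨ε, hε0, hεn⟩ := hx
    refine ⟨ε/2, by linarith, ?_⟩
    intro x' hx'
    rw [Metric.mem_ball, Real.dist_eq, abs_lt] at hx'
    simp only [mem_compl_iff, hSdef, mem_setOf_eq]
    push_neg
    refine ⟨ε/2, by linarith, measure_mono_null ?_ hεn⟩
    intro z hz
    simp only [mem_Ioo] at hz ⊢
    constructor <;> linarith [hz.1, hz.2, hx'.1, hx'.2]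
  have hm₀S : m₀ ∈ S := hm₀ ▸ hScl.csInf_mem hSne hSbdd
  have hm₀le : ∀ x ∈ S, m₀ ≤ x := fun x hx => hm₀ ▸ csInf_le hSbdd hx
  -- measure of (-∞, m₀) is 0
  have hIio : ν (Iio m₀) = 0 := by
    refine measure_mono_null (fun x hx => ?_) hcompl
    intro hxS
    exact absurd (hm₀le x hxS) (not_le.mpr hx)
  have hae_pos : ∀ᵐ x ∂ν, 0 < x := by
    rw [ae_iff]
    refine measure_mono_null (fun x hx => ?_) hsupp
    simpa [mem_Iic] using not_lt.mp hx
  have hae_m : ∀ᵐ x ∂ν, m₀ ≤ x := by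
    rw [ae_iff]
    refine measure_mono_null (fun x hx => ?_) hIio
    simpa [mem_Iio] using not_le.mp hx
  -- fixed reference bases
  set y₁ : ℝ := y₀ / 2 with hy₁def
  set y₂ : ℝ := 3 * y₀ / 4 with hy₂def
  have hy₁0 : 0 < y₁ := by positivity
  have hy₁1 : y₁ < 1 := by rw [hy₁def]; linarith
  have hy₁y₂ : y₁ < y₂ := by rw [hy₁def, hy₂def]; linarith
  have hy₂mem : y₂ ∈ Set.Ioo (0:ℝ) y₀ := ⟨by positivity, by rw [hy₂def]; linarith⟩
  have hy₁mem : y₁ ∈ Set.Ioo (0:ℝ) y₀ := ⟨hy₁0, by rw [hy₁def]; linarith⟩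
  have hfin : ∀ A : ℝ, ν (Iic A) < ⊤ :=
    aux_Iic_lt_top ν y₁ hy₁0 hy₁1 (hint y₁ hy₁mem)
  have hint_mul : ∀ y : ℝ, 0 < y → y ≤ y₁ → Integrable (fun x : ℝ => x * y ^ x) ν :=
    fun y hy hyy₁ =>
      aux_int_mul ν y y₂ hy (lt_of_le_of_lt hyy₁ hy₁y₂) (hint y₂ hy₂mem) hae_pos
  have hνuniv : 0 < ν univ := Measure.measure_univ_pos.mpr hν
  have hgpos : ∀ y : ℝ, 0 < y → y < y₀ → 0 < ∫ x, y ^ x ∂ν := by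
    intro y hy hy'
    rw [integral_pos_iff_support_of_nonneg
      (fun x => (Real.rpow_pos_of_pos hy x).le) (hint y ⟨hy, hy'⟩)]
    have hsup : Function.support (fun x : ℝ => y ^ x) = univ := by
      ext x
      simp [Function.mem_support, (Real.rpow_pos_of_pos hy x).ne']
    rw [hsup]; exact hνuniv
  -- the main estimate
  rw [Metric.tendsto_nhds]
  intro ε hε
  set b : ℝ := m₀ + ε/4 with hbdef
  set a : ℝ := m₀ + ε/2 with hadef
  -- mass near m₀
  have hIcone : ν (Ico m₀ b) ≠ 0 := by
    intro hIco
    apply hm₀S (ε/4) (by linarith)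
    have hsub : Ioo (m₀ - ε/4) (m₀ + ε/4) ⊆ Iio m₀ ∪ Ico m₀ b := by
      intro z hz
      rcases lt_or_ge z m₀ with h | h
      · exact Or.inl h
      · exact Or.inr ⟨h, by simpa [hbdef] using (mem_Ioo.mp hz).2⟩
    exact measure_mono_null hsub (measure_union_null hIio hIco)
  have hIcofin : ν (Ico m₀ b) ≠ ⊤ :=
    ((measure_mono (fun z hz => le_of_lt hz.2 : Ico m₀ b ⊆ Iic b)).trans_lt (hfin b)).ne
  set c : ℝ := (ν (Ico m₀ b)).toReal with hcdef
  have hc : 0 < c := ENNReal.toReal_pos hIcone hIcofin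
  -- integrability of (x - m₀) * y^x
  have hint_sub : ∀ y : ℝ, 0 < y → y ≤ y₁ →
      Integrable (fun x : ℝ => (x - m₀) * y ^ x) ν := by
    intro y hy hyy₁
    have heq : (fun x : ℝ => (x - m₀) * y ^ x)
        = fun x => x * y ^ x - m₀ * y ^ x := by funext x; ring
    rw [heq]
    exact (hint_mul y hy hyy₁).sub
      ((hint y ⟨hy, lt_of_le_of_lt hyy₁ (by rw [hy₁def]; linarith)⟩).const_mul m₀)
  -- tail constant
  set K₀ : ℝ := ∫ x in Ici a, (x - m₀) * y₁ ^ x ∂ν with hK₀def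
  have hK₀0 : 0 ≤ K₀ :=
    setIntegral_nonneg measurableSet_Ici (fun x hx =>
      mul_nonneg (by simp only [mem_Ici, hadef] at hx; linarith)
        (Real.rpow_pos_of_pos hy₁0 x).le)
  set K : ℝ := K₀ / y₁ ^ a with hKdef
  have hy₁a : (0:ℝ) < y₁ ^ a := Real.rpow_pos_of_pos hy₁0 a
  have hK0 : 0 ≤ K := div_nonneg hK₀0 hy₁a.le
  -- smallness of the tail factor, eventually
  have htends : Tendsto (fun y : ℝ => y ^ (ε/4) * (K/c)) (𝓝[>] (0:ℝ)) (𝓝 0) := by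
    have hcont : ContinuousAt (fun x : ℝ => x ^ (ε/4)) 0 :=
      Real.continuousAt_rpow_const 0 (ε/4) (Or.inr (by positivity))
    have h0 : (0:ℝ) ^ (ε/4) = 0 := Real.zero_rpow (by positivity)
    have h1 : Tendsto (fun y : ℝ => y ^ (ε/4)) (𝓝[>] (0:ℝ)) (𝓝 0) := by
      have h2 : Tendsto (fun y : ℝ => y ^ (ε/4)) (𝓝[>] (0:ℝ)) (𝓝 ((0:ℝ) ^ (ε/4))) :=
        hcont.tendsto.mono_left nhdsWithin_le_nhds
      rwa [h0] at h2
    simpa using h1.mul_const (K/c)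
  have hsmall : ∀ᶠ y in 𝓝[>] (0:ℝ), y ^ (ε/4) * (K/c) < ε/4 :=
    htends.eventually_lt_const (by linarith)
  filter_upwards [hsmall,
    Ioo_mem_nhdsGT_of_mem (show (0:ℝ) ∈ Ico (0:ℝ) y₁ from ⟨le_refl 0, hy₁0⟩)]
    with y hysmall hymem
  obtain ⟨hy0, hyy₁⟩ := hymem
  have hyy₁' : y ≤ y₁ := hyy₁.le
  have hyy₀ : y < y₀ := lt_trans hyy₁ (by rw [hy₁def]; linarith)
  have hy1 : y < 1 := hyy₀.trans hy₀1
  set g : ℝ := ∫ x, y ^ x ∂ν with hgdef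
  set f : ℝ := ∫ x, x * y ^ x ∂ν with hfdef
  set N : ℝ := ∫ x, (x - m₀) * y ^ x ∂ν with hNdef
  have hg : 0 < g := hgpos y hy0 hyy₀
  have hIg : Integrable (fun x : ℝ => y ^ x) ν := hint y ⟨hy0, hyy₀⟩
  have hIf : Integrable (fun x : ℝ => x * y ^ x) ν := hint_mul y hy0 hyy₁'
  have hIN : Integrable (fun x : ℝ => (x - m₀) * y ^ x) ν := hint_sub y hy0 hyy₁'
  have hNeq : N = f - m₀ * g := by
    rw [hNdef, hfdef, hgdef]
    have heq : (fun x : ℝ => (x - m₀) * y ^ x) = fun x => x * y ^ x - m₀ * y ^ x := by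
      funext x; ring
    rw [heq, integral_sub hIf (hIg.const_mul m₀), integral_const_mul _ _]
  have hN0 : 0 ≤ N := by
    refine integral_nonneg_of_ae ?_
    filter_upwards [hae_m] with x hx
    exact mul_nonneg (sub_nonneg.mpr hx) (Real.rpow_pos_of_pos hy0 x).le
  have hsplit : N = (∫ x in Iio a, (x - m₀) * y ^ x ∂ν)
      + ∫ x in Ici a, (x - m₀) * y ^ x ∂ν := by
    rw [hNdef, ← integral_add_compl measurableSet_Iio hIN, compl_Iio]
  have hbound1 : (∫ x in Iio a, (x - m₀) * y ^ x ∂ν) ≤ ε/2 * g := by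
    calc ∫ x in Iio a, (x - m₀) * y ^ x ∂ν
        ≤ ∫ x in Iio a, ε/2 * y ^ x ∂ν := by
          refine setIntegral_mono_on hIN.integrableOn
            ((hIg.const_mul (ε/2)).integrableOn) measurableSet_Iio ?_
          intro x hx
          have hxa : x - m₀ ≤ ε/2 := by simp only [mem_Iio, hadef] at hx; linarith
          exact mul_le_mul_of_nonneg_right hxa (Real.rpow_pos_of_pos hy0 x).le
      _ = ε/2 * ∫ x in Iio a, y ^ x ∂ν := integral_const_mul _ _
      _ ≤ ε/2 * g := by
          refine mul_le_mul_of_nonneg_left ?_ (by linarith)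
          exact setIntegral_le_integral hIg
            (Eventually.of_forall fun x => (Real.rpow_pos_of_pos hy0 x).le)
  have hbound2 : (∫ x in Ici a, (x - m₀) * y ^ x ∂ν) ≤ y ^ a * K := by
    have hIy₁ : Integrable (fun x : ℝ => (x - m₀) * y₁ ^ x) ν := hint_sub y₁ hy₁0 le_rfl
    calc ∫ x in Ici a, (x - m₀) * y ^ x ∂ν
        ≤ ∫ x in Ici a, (y ^ a / y₁ ^ a) * ((x - m₀) * y₁ ^ x) ∂ν := by
          refine setIntegral_mono_on hIN.integrableOn
            ((hIy₁.const_mul _).integrableOn) measurableSet_Ici ?_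
          intro x hx
          rw [mem_Ici] at hx
          have hxm : 0 ≤ x - m₀ := by rw [hadef] at hx; linarith
          have hr : y ^ (x - a) ≤ y₁ ^ (x - a) :=
            Real.rpow_le_rpow hy0.le hyy₁' (sub_nonneg.mpr hx)
          have hyx : y ^ x = y ^ (x - a) * y ^ a := by
            rw [← Real.rpow_add hy0]; congr 1; ring
          have hy₁x : y₁ ^ (x - a) = y₁ ^ x / y₁ ^ a := Real.rpow_sub hy₁0 x a
          calc (x - m₀) * y ^ x = ((x - m₀) * y ^ a) * y ^ (x - a) := by rw [hyx]; ring
            _ ≤ ((x - m₀) * y ^ a) * y₁ ^ (x - a) := by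
                refine mul_le_mul_of_nonneg_left hr ?_
                exact mul_nonneg hxm (Real.rpow_pos_of_pos hy0 a).le
            _ = (y ^ a / y₁ ^ a) * ((x - m₀) * y₁ ^ x) := by
                rw [hy₁x]; field_simp
      _ = (y ^ a / y₁ ^ a) * K₀ := integral_const_mul _ _
      _ = y ^ a * K := by rw [hKdef]; ring
  have hglower : y ^ b * c ≤ g := by
    have h1 : y ^ b * c ≤ ∫ x in Ico m₀ b, y ^ x ∂ν := by
      refine (le_of_eq ?_).trans (setIntegral_ge_of_const_le (c := y ^ b) measurableSet_Ico hIcofin ?_ hIg.integrableOn)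
      · exact mul_comm _ _
      intro x hx
      exact Real.rpow_le_rpow_of_exponent_ge hy0 hy1.le hx.2.le
    exact h1.trans (setIntegral_le_integral hIg
      (Eventually.of_forall fun x => (Real.rpow_pos_of_pos hy0 x).le))
  have hyb : 0 < y ^ b := Real.rpow_pos_of_pos hy0 b
  have hya : 0 < y ^ a := Real.rpow_pos_of_pos hy0 a
  have hgc : 0 < y ^ b * c := by positivity
  have hNle : N ≤ ε/2 * g + y ^ a * K := by
    rw [hsplit]; exact add_le_add hbound1 hbound2
  have hratio : f / g - m₀ = N / g := by
    rw [hNeq, sub_div, mul_div_assoc, div_self hg.ne', mul_one]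
  have hkey : N / g ≤ ε/2 + y ^ (ε/4) * (K/c) := by
    have h2 : N / g ≤ (ε/2 * g + y ^ a * K) / g := by gcongr
    have h3 : (ε/2 * g + y ^ a * K) / g = ε/2 + (y ^ a * K) / g := by
      field_simp
    have h4 : (y ^ a * K) / g ≤ (y ^ a * K) / (y ^ b * c) := by
      apply div_le_div_of_nonneg_left (mul_nonneg hya.le hK0) hgc hglower
    have h5 : (y ^ a * K) / (y ^ b * c) = y ^ (ε/4) * (K/c) := by
      have ha : y ^ a = y ^ (ε/4) * y ^ b := by
        rw [← Real.rpow_add hy0]; congr 1; rw [hbdef, hadef]; ring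
      rw [ha]; field_simp
    calc N / g ≤ (ε/2 * g + y ^ a * K) / g := h2
      _ = ε/2 + (y ^ a * K) / g := h3
      _ ≤ ε/2 + (y ^ a * K) / (y ^ b * c) := by linarith [h4]
      _ = ε/2 + y ^ (ε/4) * (K/c) := by rw [h5]
  rw [Real.dist_eq]
  have hsub' : f / g - m₀ = N / g := hratio
  rw [hsub', abs_of_nonneg (div_nonneg hN0 hg.le)]
  calc N / g ≤ ε/2 + y ^ (ε/4) * (K/c) := hkey
    _ < ε/2 + ε/4 := by linarith [hysmall]
    _ < ε := by linarith
end

section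
/- With μ₀, g₀, K, ℓ_t as above, and M_t := g₀(ℓ_t) for t > 1/K, M_t := g₀(1) = ∫ m dμ₀ for t ≤ 1/K (assuming this is finite), the function t ↦ M_t is continuous on [0,∞), constant on [0, 1/K], and strictly decreasing on [1/K, ∞). -/
open MeasureTheory Set Filter Topology

/-- With `M_t = g₀(ℓ_t)` for `t > 1/K` and `M_t = M₀ = ∫ m dμ₀`
for `t ≤ 1/K`, the function `t ↦ M_t` is continuous on `[0,∞)`, constant on
`[0,1/K]` and strictly decreasing on `[1/K,∞)`. -/
theorem stmt_3 (μ₀ : Measure ℝ) (hμ₀ : μ₀ ≠ 0)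
    (hsupp : μ₀ (Set.Iic (0:ℝ)) = 0)
    (K : ℝ) (hKpos : 0 < K)
    (hint : Integrable (fun m : ℝ => m ^ 2) μ₀)
    (hK : ∫ m, m ^ 2 ∂μ₀ = K)
    (M₀ : ℝ) (hintm : Integrable (fun m : ℝ => m) μ₀)
    (hM₀ : ∫ m, m ∂μ₀ = M₀)
    (g₀ : ℝ → ℝ)
    (hg₀ : ∀ x ∈ Set.Icc (0:ℝ) 1, g₀ x = ∫ m, m * x ^ m ∂μ₀)
    (ℓ : ℝ → ℝ)
    (hℓ : ∀ t > 1 / K, ℓ t ∈ Set.Ioo (0:ℝ) 1 ∧ ℓ t * deriv g₀ (ℓ t) = 1 / t)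
    (M : ℝ → ℝ)
    (hM : ∀ t, M t = if t ≤ 1 / K then M₀ else g₀ (ℓ t)) :
    ContinuousOn M (Set.Ici (0:ℝ)) ∧
    (∀ t ∈ Set.Icc (0:ℝ) (1 / K), M t = M₀) ∧
    StrictAntiOn M (Set.Ici (1 / K)) := by
  have hKne : (0:ℝ) < 1 / K := by positivity
  have hae : ∀ᵐ m ∂μ₀, 0 < m := by
    rw [ae_iff]
    have h : {a : ℝ | ¬ 0 < a} = Set.Iic 0 := by ext a; simp [not_lt]
    rw [h]; exact hsupp
  have hμpos : 0 < μ₀ (Set.Ioi 0) := by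
    rcases (zero_le : 0 ≤ μ₀ (Set.Ioi 0)).eq_or_lt with h | h
    · exfalso; apply hμ₀
      have huniv : μ₀ Set.univ = 0 := by
        have hle := measure_union_le (μ := μ₀) (Set.Iic 0) (Set.Ioi 0)
        rw [Set.Iic_union_Ioi, hsupp, ← h] at hle
        simpa using hle
      exact Measure.measure_univ_eq_zero.mp huniv
    · exact h
  set G : ℝ → ℝ := fun x => ∫ m, m * x ^ m ∂μ₀ with hGdef
  set H : ℝ → ℝ := fun x => ∫ m, m ^ 2 * x ^ m ∂μ₀ with hHdef
  have measG : ∀ x : ℝ, AEStronglyMeasurable (fun m : ℝ => m * x ^ m) μ₀ := fun x =>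
    (measurable_id.mul (measurable_const.pow measurable_id)).aestronglyMeasurable
  have measH : ∀ x : ℝ, AEStronglyMeasurable (fun m : ℝ => m ^ 2 * x ^ m) μ₀ := fun x =>
    ((measurable_id.pow_const 2).mul (measurable_const.pow measurable_id)).aestronglyMeasurable
  have hxm01 : ∀ x ∈ Set.Icc (0:ℝ) 1, ∀ m : ℝ, 0 < m → x ^ m ∈ Set.Icc (0:ℝ) 1 := by
    intro x hx m hm
    exact ⟨Real.rpow_nonneg hx.1 m, Real.rpow_le_one hx.1 hx.2 hm.le⟩
  have boundG : ∀ x ∈ Set.Icc (0:ℝ) 1, ∀ᵐ m ∂μ₀, ‖m * x ^ m‖ ≤ ‖m‖ := by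
    intro x hx
    filter_upwards [hae] with m hm
    have h01 := hxm01 x hx m hm
    rw [Real.norm_eq_abs, Real.norm_eq_abs, abs_mul, abs_of_nonneg h01.1]
    calc |m| * x ^ m ≤ |m| * 1 := by gcongr; exact h01.2
    _ = |m| := mul_one _
  have boundH : ∀ x ∈ Set.Icc (0:ℝ) 1, ∀ᵐ m ∂μ₀, ‖m ^ 2 * x ^ m‖ ≤ ‖m ^ 2‖ := by
    intro x hx
    filter_upwards [hae] with m hm
    have h01 := hxm01 x hx m hm
    rw [Real.norm_eq_abs, Real.norm_eq_abs, abs_mul, abs_of_nonneg h01.1]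
    calc |m ^ 2| * x ^ m ≤ |m ^ 2| * 1 := by gcongr; exact h01.2
    _ = |m ^ 2| := mul_one _
  have intG : ∀ x ∈ Set.Icc (0:ℝ) 1, Integrable (fun m : ℝ => m * x ^ m) μ₀ :=
    fun x hx => hintm.mono (measG x) (boundG x hx)
  have intH : ∀ x ∈ Set.Icc (0:ℝ) 1, Integrable (fun m : ℝ => m ^ 2 * x ^ m) μ₀ :=
    fun x hx => hint.mono (measH x) (boundH x hx)
  have contF : ∀ m : ℝ, 0 < m → Continuous (fun x : ℝ => x ^ m) := fun m hm =>
    continuous_iff_continuousAt.2 fun x => Real.continuousAt_rpow_const x m (Or.inr hm.le)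
  -- strict monotonicity
  have key : ∀ w : ℝ → ℝ, (∀ m : ℝ, 0 < m → 0 < w m) →
      (∀ x ∈ Set.Icc (0:ℝ) 1, Integrable (fun m => w m * x ^ m) μ₀) →
      StrictMonoOn (fun x => ∫ m, w m * x ^ m ∂μ₀) (Set.Icc (0:ℝ) 1) := by
    intro w hw hwint x hx y hy hxy
    have hint2 : Integrable (fun m => w m * y ^ m - w m * x ^ m) μ₀ :=
      (hwint y hy).sub (hwint x hx)
    have hpos : 0 < ∫ m, (w m * y ^ m - w m * x ^ m) ∂μ₀ := by
      rw [integral_pos_iff_support_of_nonneg_ae ?_ hint2]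
      · refine lt_of_lt_of_le hμpos (measure_mono ?_)
        intro m hm
        have h1 : x ^ m < y ^ m := Real.rpow_lt_rpow hx.1 hxy hm
        have h2 := hw m hm
        simp only [Function.mem_support]
        intro hc
        nlinarith
      · filter_upwards [hae] with m hm
        have h1 : x ^ m ≤ y ^ m := Real.rpow_le_rpow hx.1 hxy.le hm.le
        have h2 := (hw m hm).le
        simp only [Pi.zero_apply]
        nlinarith
    rw [integral_sub (hwint y hy) (hwint x hx)] at hpos
    simp only
    linarith
  have strictG : StrictMonoOn G (Set.Icc (0:ℝ) 1) := key _ (fun m hm => hm) intG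
  have strictH : StrictMonoOn H (Set.Icc (0:ℝ) 1) := key _ (fun m hm => by positivity) intH
  have hG1 : G 1 = M₀ := by
    rw [hGdef]; simp only [Real.one_rpow, mul_one]; exact hM₀
  have hH1 : H 1 = K := by
    rw [hHdef]; simp only [Real.one_rpow, mul_one]; exact hK
  have contG : ContinuousOn G (Set.Icc (0:ℝ) 1) := by
    apply continuousOn_of_dominated (fun x _ => measG x) boundG hintm.norm
    filter_upwards [hae] with m hm
    exact (continuous_const.mul (contF m hm)).continuousOn
  -- derivative of G at interior points
  have hDG : ∀ x₀ ∈ Set.Ioo (0:ℝ) 1,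
      HasDerivAt G (∫ m, m ^ 2 * x₀ ^ (m - 1) ∂μ₀) x₀ := by
    intro x₀ hx₀
    have hx₀pos := hx₀.1
    set ε : ℝ := min (x₀ / 2) ((1 - x₀) / 2) with hεdef
    have hε : 0 < ε := by
      apply lt_min <;> [positivity; linarith [hx₀.2]]
    have hball : Metric.ball x₀ ε ⊆ Set.Ioo (x₀ / 2) 1 := by
      intro x hx
      rw [Metric.mem_ball, Real.dist_eq, abs_lt] at hx
      have h1 := min_le_left (x₀ / 2) ((1 - x₀) / 2)
      have h2 := min_le_right (x₀ / 2) ((1 - x₀) / 2)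
      constructor <;> [linarith [hx.1]; linarith [hx.2]]
    have := (hasDerivAt_integral_of_dominated_loc_of_deriv_le
      (F := fun (x : ℝ) (m : ℝ) => m * x ^ m)
      (F' := fun (x : ℝ) (m : ℝ) => m ^ 2 * x ^ (m - 1))
      (bound := fun m => m ^ 2 * (2 / x₀)) (Metric.ball_mem_nhds x₀ hε)
      (Eventually.of_forall fun x => measG x)
      (intG x₀ (Ioo_subset_Icc_self hx₀))
      (((measurable_id.pow_const 2).mul
        ((measurable_const : Measurable fun _ : ℝ => x₀).pow (measurable_id.sub (measurable_const : Measurable fun _ : ℝ => (1:ℝ))))).aestronglyMeasurable)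
      ?_ (hint.mul_const _) ?_)
    · exact this.2
    · filter_upwards [hae] with m hm x hx
      have hx' := hball hx
      have hxpos : 0 < x := lt_trans (by positivity) hx'.1
      have h1 : x ^ (m - 1) = x ^ m / x := by
        rw [Real.rpow_sub hxpos, Real.rpow_one]
      have h2 : x ^ m ≤ 1 := Real.rpow_le_one hxpos.le hx'.2.le hm.le
      have h3 : x ^ (m - 1) ≤ 2 / x₀ := by
        rw [h1]
        have h4 : x ^ m / x ≤ 1 / x := by gcongr
        have h5 : 1 / x ≤ 2 / x₀ := by
          rw [div_le_div_iff₀ hxpos hx₀pos]; linarith [hx'.1]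
        linarith
      have h6 : 0 ≤ x ^ (m - 1) := Real.rpow_nonneg hxpos.le _
      rw [Real.norm_eq_abs, abs_mul, abs_of_nonneg h6, abs_of_nonneg (sq_nonneg m)]
      exact mul_le_mul_of_nonneg_left h3 (sq_nonneg m)
    · filter_upwards [hae] with m hm x hx
      have hx' := hball hx
      have hxpos : 0 < x := lt_trans (by positivity) hx'.1
      have h := (Real.hasDerivAt_rpow_const (x := x) (p := m) (Or.inl hxpos.ne')).const_mul m
      have he : m * (m * x ^ (m - 1)) = m ^ 2 * x ^ (m - 1) := by ring
      rw [← he]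
      exact h
  -- the key identity H (ℓ t) = 1 / t
  have hℓmem : ∀ t, 1 / K < t → ℓ t ∈ Set.Icc (0:ℝ) 1 :=
    fun t ht => Ioo_subset_Icc_self (hℓ t ht).1
  have hHt : ∀ t, 1 / K < t → H (ℓ t) = 1 / t := by
    intro t ht
    obtain ⟨hmem, heq⟩ := hℓ t ht
    have hpos := hmem.1
    have hEq : g₀ =ᶠ[𝓝 (ℓ t)] G := by
      filter_upwards [Ioo_mem_nhds hmem.1 hmem.2] with x hx
      exact hg₀ x (Ioo_subset_Icc_self hx)
    have hderiv : deriv g₀ (ℓ t) = ∫ m, m ^ 2 * (ℓ t) ^ (m - 1) ∂μ₀ := by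
      rw [hEq.deriv_eq]; exact (hDG (ℓ t) hmem).deriv
    have hfun : (fun m : ℝ => m ^ 2 * (ℓ t) ^ m)
        = fun m => ℓ t * (m ^ 2 * (ℓ t) ^ (m - 1)) := by
      funext m
      rw [Real.rpow_sub hpos, Real.rpow_one]
      field_simp
    calc H (ℓ t) = ∫ m, ℓ t * (m ^ 2 * (ℓ t) ^ (m - 1)) ∂μ₀ := by
          rw [hHdef]; simp only; rw [hfun]
      _ = ℓ t * ∫ m, m ^ 2 * (ℓ t) ^ (m - 1) ∂μ₀ := integral_const_mul _ _
      _ = ℓ t * deriv g₀ (ℓ t) := by rw [hderiv]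
      _ = 1 / t := heq
  have hMval : ∀ t, 1 / K < t → M t = G (ℓ t) := by
    intro t ht
    rw [hM t, if_neg (not_le.2 ht), hg₀ _ (hℓmem t ht)]
  -- ℓ is strictly decreasing
  have hℓanti : ∀ s t, 1 / K < s → s < t → ℓ t < ℓ s := by
    intro s t hs hst
    have ht : 1 / K < t := hs.trans hst
    by_contra hc
    push_neg at hc
    have h1 : H (ℓ s) ≤ H (ℓ t) := by
      rcases hc.eq_or_lt with h | h
      · rw [h]
      · exact (strictH (hℓmem s hs) (hℓmem t ht) h).le
    rw [hHt s hs, hHt t ht] at h1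
    have hspos : 0 < s := hKne.trans hs
    have h2 : 1 / t < 1 / s := one_div_lt_one_div_of_lt hspos hst
    linarith
  -- strict antitonicity of M
  have hSA : StrictAntiOn M (Set.Ici (1 / K)) := by
    intro a ha b hb hab
    have hb' : 1 / K < b := lt_of_le_of_lt ha hab
    rw [hMval b hb']
    rcases (Set.mem_Ici.mp ha).eq_or_lt with h | h
    · rw [hM a, if_pos h.symm.le, ← hG1]
      exact strictG (hℓmem b hb') ⟨zero_le_one, le_rfl⟩ (hℓ b hb').1.2
    · rw [hMval a h]
      exact strictG (hℓmem b hb') (hℓmem a h) (hℓanti a b h hab)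
  -- tendsto of ℓ at points > 1/K
  have htend : ∀ t, 1 / K < t → Tendsto ℓ (𝓝 t) (𝓝 (ℓ t)) := by
    intro t ht
    have hmem := (hℓ t ht).1
    have hEvent : ∀ᶠ s in 𝓝 t, 1 / K < s := eventually_gt_nhds ht
    have htpos : 0 < t := hKne.trans ht
    have hinv : Tendsto (fun s : ℝ => 1 / s) (𝓝 t) (𝓝 (1 / t)) :=
      (continuousAt_const.div continuousAt_id htpos.ne')
    rw [tendsto_order]
    constructor
    · intro a ha
      rcases le_or_gt a 0 with h0 | h0
      · filter_upwards [hEvent] with s hs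
        exact lt_of_le_of_lt h0 (hℓ s hs).1.1
      · have haI : a ∈ Set.Icc (0:ℝ) 1 := ⟨h0.le, (ha.trans hmem.2).le⟩
        have hHa : H a < 1 / t := by
          rw [← hHt t ht]; exact strictH haI (hℓmem t ht) ha
        have hev2 := hinv.eventually (eventually_gt_nhds hHa)
        filter_upwards [hEvent, hev2] with s hs1 hs2
        by_contra hc
        push_neg at hc
        have h1 : H (ℓ s) ≤ H a := by
          rcases hc.eq_or_lt with h | h
          · rw [h]
          · exact (strictH (hℓmem s hs1) haI h).le
        rw [hHt s hs1] at h1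
        linarith
    · intro b hb
      rcases le_or_gt 1 b with h1 | h1
      · filter_upwards [hEvent] with s hs
        exact lt_of_lt_of_le (hℓ s hs).1.2 h1
      · have hbI : b ∈ Set.Icc (0:ℝ) 1 := ⟨(hmem.1.trans hb).le, h1.le⟩
        have hHb : 1 / t < H b := by
          rw [← hHt t ht]; exact strictH (hℓmem t ht) hbI hb
        have hev2 := hinv.eventually (eventually_lt_nhds hHb)
        filter_upwards [hEvent, hev2] with s hs1 hs2
        by_contra hc
        push_neg at hc
        have h1 : H b ≤ H (ℓ s) := by
          rcases hc.eq_or_lt with h | h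
          · rw [h]
          · exact (strictH hbI (hℓmem s hs1) h).le
        rw [hHt s hs1] at h1
        linarith
  -- continuity of M at points > 1/K
  have hMcontAt : ∀ t, 1 / K < t → ContinuousAt M t := by
    intro t ht
    have hGat : ContinuousAt G (ℓ t) :=
      contG.continuousAt (Icc_mem_nhds (hℓ t ht).1.1 (hℓ t ht).1.2)
    have hc : ContinuousAt (fun s => G (ℓ s)) t := hGat.comp (htend t ht)
    apply hc.congr
    filter_upwards [eventually_gt_nhds ht] with s hs
    exact (hMval s hs).symm
  -- continuity of M at 1/K
  have hM0K : M (1 / K) = M₀ := by rw [hM, if_pos le_rfl]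
  have hMcontK : ContinuousAt M (1 / K) := by
    unfold ContinuousAt
    rw [hM0K, ← nhdsLE_sup_nhdsGT (1 / K), tendsto_sup]
    constructor
    · apply Tendsto.congr' ?_ tendsto_const_nhds
      filter_upwards [self_mem_nhdsWithin] with s hs
      rw [hM s, if_pos (show s ≤ 1 / K from hs)]
    · have hKinv : Tendsto (fun s : ℝ => 1 / s) (𝓝[>] (1 / K)) (𝓝 K) := by
        have h1 : Tendsto (fun s : ℝ => 1 / s) (𝓝 (1 / K)) (𝓝 (1 / (1 / K))) :=
          (continuousAt_const.div continuousAt_id hKne.ne')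
        rw [one_div_one_div] at h1
        exact h1.mono_left nhdsWithin_le_nhds
      have hℓto1 : Tendsto ℓ (𝓝[>] (1 / K)) (𝓝 1) := by
        rw [tendsto_order]
        constructor
        · intro a ha
          rcases le_or_gt a 0 with h0 | h0
          · filter_upwards [self_mem_nhdsWithin] with s hs
            exact lt_of_le_of_lt h0 (hℓ s hs).1.1
          · have haI : a ∈ Set.Icc (0:ℝ) 1 := ⟨h0.le, ha.le⟩
            have hHa : H a < K := by
              rw [← hH1]; exact strictH haI ⟨zero_le_one, le_rfl⟩ ha
            have hev2 := hKinv.eventually (eventually_gt_nhds hHa)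
            filter_upwards [self_mem_nhdsWithin, hev2] with s hs1 hs2
            by_contra hc
            push_neg at hc
            have h1 : H (ℓ s) ≤ H a := by
              rcases hc.eq_or_lt with h | h
              · rw [h]
              · exact (strictH (hℓmem s hs1) haI h).le
            rw [hHt s hs1] at h1
            linarith
        · intro b hb
          filter_upwards [self_mem_nhdsWithin] with s hs
          exact (hℓ s hs).1.2.trans hb
      have hℓto1' : Tendsto ℓ (𝓝[>] (1 / K)) (𝓝[Set.Icc (0:ℝ) 1] 1) := by
        rw [tendsto_nhdsWithin_iff]
        refine ⟨hℓto1, ?_⟩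
        filter_upwards [self_mem_nhdsWithin] with s hs
        exact hℓmem s hs
      have h2 : Tendsto (fun s => G (ℓ s)) (𝓝[>] (1 / K)) (𝓝 (G 1)) :=
        (contG 1 ⟨zero_le_one, le_rfl⟩).tendsto.comp hℓto1'
      rw [hG1] at h2
      apply Tendsto.congr' ?_ h2
      filter_upwards [self_mem_nhdsWithin] with s hs
      exact (hMval s hs).symm
  refine ⟨?_, ?_, hSA⟩
  · intro t htI
    rcases lt_trichotomy t (1 / K) with h | h | h
    · apply ContinuousAt.continuousWithinAt
      apply continuousAt_const.congr
      filter_upwards [eventually_lt_nhds h] with s hs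
      rw [hM s, if_pos hs.le]
    · rw [h]
      exact hMcontK.continuousWithinAt
    · exact (hMcontAt t h).continuousWithinAt
  · intro t ht
    rw [hM t, if_pos ht.2]
end

section
/- Let μ₀ be a nonzero non-negative Radon measure on (0,∞) with m₀ := inf supp μ₀ ≥ 0, finite second moment K ∈ (0,∞), and for t > 1/K let ℓ_t ∈ (0,1) solve ℓ_t g₀'(ℓ_t) = 1/t where g₀(x) = ∫ m x^m dμ₀(m), and M_t = g₀(ℓ_t). Then 1/(t M_t) → m₀ as t → ∞. -/
open MeasureTheory Set Filter Topology

set_option maxHeartbeats 1000000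

/-- With `ℓ_t` solving `ℓ_t g₀'(ℓ_t) = 1/t` for `t > 1/K` and
`M_t = g₀(ℓ_t)`, one has `1/(t M_t) → m₀ = inf supp μ₀` as `t → ∞`. -/
theorem stmt_4 (μ₀ : Measure ℝ) (hμ₀ : μ₀ ≠ 0)
    (hsupp : μ₀ (Set.Iic (0:ℝ)) = 0)
    (K : ℝ) (hKpos : 0 < K)
    (hint : Integrable (fun m : ℝ => m ^ 2) μ₀)
    (hK : ∫ m, m ^ 2 ∂μ₀ = K)
    (g₀ : ℝ → ℝ)
    (hg₀ : ∀ x ∈ Set.Icc (0:ℝ) 1, g₀ x = ∫ m, m * x ^ m ∂μ₀)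
    (ℓ : ℝ → ℝ)
    (hℓ : ∀ t > 1 / K, ℓ t ∈ Set.Ioo (0:ℝ) 1 ∧ ℓ t * deriv g₀ (ℓ t) = 1 / t)
    (m₀ : ℝ) (hm₀nonneg : 0 ≤ m₀)
    (hm₀ : m₀ = sInf {x : ℝ | ∀ ε > 0, μ₀ (Set.Ioo (x - ε) (x + ε)) ≠ 0}) :
    Tendsto (fun t => 1 / (t * g₀ (ℓ t))) atTop (𝓝 m₀) := by
  -- a.e. positivity
  have hμpos : ∀ᵐ m ∂μ₀, 0 < m := by
    rw [ae_iff]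
    have h : {m : ℝ | ¬ 0 < m} = Set.Iic 0 := by ext m; simp [not_lt]
    rw [h]; exact hsupp
  -- the support set
  set S : Set ℝ := {x : ℝ | ∀ ε > 0, μ₀ (Set.Ioo (x - ε) (x + ε)) ≠ 0} with hSdef
  have hSne : S.Nonempty := by
    by_contra h
    rw [not_nonempty_iff_eq_empty] at h
    have huniv : μ₀ (Set.univ : Set ℝ) = 0 := by
      apply measure_null_of_locally_null
      intro x _
      have hx : x ∉ S := by rw [h]; exact notMem_empty x
      simp only [hSdef, mem_setOf_eq, not_forall] at hx
      obtain ⟨ε, hε, hx0⟩ := hx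
      rw [not_ne_iff] at hx0
      refine ⟨Set.Ioo (x - ε) (x + ε), ?_, hx0⟩
      exact nhdsWithin_le_nhds (Ioo_mem_nhds (by linarith) (by linarith))
    exact hμ₀ (Measure.measure_univ_eq_zero.mp huniv)
  have hSbdd : BddBelow S := by
    refine ⟨0, fun x hx => ?_⟩
    by_contra hx0
    push_neg at hx0
    have := hx (-x) (by linarith)
    apply this
    apply measure_mono_null _ hsupp
    intro y hy
    simp only [mem_Ioo] at hy
    have : y < 0 := by linarith [hy.2]
    exact le_of_lt this
  have hSclosed : IsClosed S := by
    rw [← isOpen_compl_iff, Metric.isOpen_iff]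
    intro x hx
    simp only [mem_compl_iff, hSdef, mem_setOf_eq, not_forall] at hx
    obtain ⟨ε, hε, hx0⟩ := hx
    rw [not_ne_iff] at hx0
    refine ⟨ε/2, by linarith, fun y hy => ?_⟩
    simp only [Metric.mem_ball, Real.dist_eq] at hy
    simp only [mem_compl_iff, hSdef, mem_setOf_eq, not_forall]
    refine ⟨ε/2, by linarith, ?_⟩
    rw [not_ne_iff]
    apply measure_mono_null _ hx0
    intro z hz
    simp only [mem_Ioo] at hz ⊢
    rw [abs_lt] at hy
    constructor <;> linarith [hz.1, hz.2, hy.1, hy.2]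
  have hm₀S : m₀ ∈ S := by rw [hm₀]; exact hSclosed.csInf_mem hSne hSbdd
  -- a.e. m₀ ≤ m
  have hIio : μ₀ (Set.Iio m₀) = 0 := by
    apply measure_null_of_locally_null
    intro x hx
    have hxS : x ∉ S := by
      intro hxS
      have : m₀ ≤ x := by rw [hm₀]; exact csInf_le hSbdd hxS
      exact absurd hx (by simp [not_lt.mpr this])
    simp only [hSdef, mem_setOf_eq, not_forall] at hxS
    obtain ⟨ε, hε, hx0⟩ := hxS
    rw [not_ne_iff] at hx0
    refine ⟨Set.Ioo (x - ε) (x + ε), ?_, hx0⟩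
    exact nhdsWithin_le_nhds (Ioo_mem_nhds (by linarith) (by linarith))
  have haege : ∀ᵐ m ∂μ₀, m₀ ≤ m := by
    rw [ae_iff]
    have h : {m : ℝ | ¬ m₀ ≤ m} = Set.Iio m₀ := by ext m; simp [not_le]
    rw [h]; exact hIio
  -- measurability helpers
  have hcont1 : ∀ x : ℝ, 0 < x → AEStronglyMeasurable (fun m : ℝ => m * x ^ m) μ₀ := by
    intro x hx
    exact (continuous_id.mul
      (continuous_const.rpow continuous_id fun _ => Or.inl hx.ne')).aestronglyMeasurable
  have hcont2 : ∀ x : ℝ, 0 < x → AEStronglyMeasurable (fun m : ℝ => m ^ 2 * x ^ m) μ₀ := by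
    intro x hx
    exact ((continuous_pow 2).mul
      (continuous_const.rpow continuous_id fun _ => Or.inl hx.ne')).aestronglyMeasurable
  -- integrability of id
  set t₀ : ℝ := 1/K + 1 with ht₀def
  have ht₀ : t₀ > 1/K := by
    rw [ht₀def]; linarith
  have ht₀pos : 0 < t₀ := by
    rw [ht₀def]; positivity
  obtain ⟨hl₀mem, hl₀eq⟩ := hℓ t₀ ht₀
  have hInt0 : Integrable (fun m : ℝ => m * (ℓ t₀) ^ m) μ₀ := by
    by_contra hni
    have hd0 : deriv g₀ (ℓ t₀) ≠ 0 := by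
      intro h
      rw [h, mul_zero] at hl₀eq
      exact absurd hl₀eq.symm (by positivity)
    -- g₀ vanishes on [ℓ t₀, 1)
    have hz : ∀ x ∈ Set.Ico (ℓ t₀) 1, g₀ x = 0 := by
      intro x hx
      have hxpos : 0 < x := lt_of_lt_of_le hl₀mem.1 hx.1
      rw [hg₀ x ⟨hxpos.le, hx.2.le⟩]
      apply integral_undef
      intro hI
      apply hni
      refine hI.mono (hcont1 _ hl₀mem.1) ?_
      filter_upwards [hμpos] with m hm
      have h1 : (0:ℝ) ≤ m * (ℓ t₀) ^ m :=
        mul_nonneg hm.le (Real.rpow_nonneg hl₀mem.1.le m)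
      have h2 : (0:ℝ) ≤ m * x ^ m := mul_nonneg hm.le (Real.rpow_nonneg hxpos.le m)
      rw [Real.norm_eq_abs, Real.norm_eq_abs, abs_of_nonneg h1, abs_of_nonneg h2]
      exact mul_le_mul_of_nonneg_left (Real.rpow_le_rpow hl₀mem.1.le hx.1 hm.le) hm.le
    apply hd0
    by_cases hdiff : DifferentiableAt ℝ g₀ (ℓ t₀)
    · have h1 : HasDerivWithinAt g₀ (deriv g₀ (ℓ t₀)) (Set.Ici (ℓ t₀)) (ℓ t₀) :=
        hdiff.hasDerivAt.hasDerivWithinAt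
      have h2 : HasDerivWithinAt g₀ 0 (Set.Ici (ℓ t₀)) (ℓ t₀) := by
        have hmem' : Set.Ico (ℓ t₀) 1 ∈ 𝓝[Set.Ici (ℓ t₀)] (ℓ t₀) := by
          rw [← Ici_inter_Iio]
          exact inter_mem_nhdsWithin _ (Iio_mem_nhds hl₀mem.2)
        refine (hasDerivWithinAt_const (ℓ t₀) _ (0:ℝ)).congr_of_eventuallyEq ?_
          (hz _ ⟨le_refl _, hl₀mem.2⟩)
        filter_upwards [hmem'] with y hy using hz y hy
      exact (uniqueDiffOn_Ici (ℓ t₀) (ℓ t₀) Set.self_mem_Ici).eq_deriv _ h1 h2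
    · exact deriv_zero_of_not_differentiableAt hdiff
  have hIntm : Integrable (fun m : ℝ => m) μ₀ := by
    have hsum : Integrable (fun m : ℝ => m ^ 2 + m * (ℓ t₀) ^ m / (ℓ t₀)) μ₀ :=
      hint.add (hInt0.div_const _)
    refine hsum.mono measurable_id.aestronglyMeasurable ?_
    filter_upwards [hμpos] with m hm
    have hrp : (0:ℝ) ≤ (ℓ t₀) ^ m := Real.rpow_nonneg hl₀mem.1.le m
    have hdiv : (0:ℝ) ≤ m * (ℓ t₀) ^ m / (ℓ t₀) :=
      div_nonneg (mul_nonneg hm.le hrp) hl₀mem.1.le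
    have hbig : (0:ℝ) ≤ m ^ 2 + m * (ℓ t₀) ^ m / (ℓ t₀) := by
      have := sq_nonneg m; linarith
    rw [Real.norm_eq_abs, Real.norm_eq_abs, abs_of_nonneg hm.le, abs_of_nonneg hbig]
    rcases le_or_gt 1 m with h1 | h1
    · have hmsq : m ≤ m ^ 2 := by nlinarith
      linarith
    · have hrp1 : (ℓ t₀) ^ (1:ℝ) ≤ (ℓ t₀) ^ m :=
        Real.rpow_le_rpow_of_exponent_ge hl₀mem.1 hl₀mem.2.le h1.le
      rw [Real.rpow_one] at hrp1
      have hm2 : m ≤ m * (ℓ t₀) ^ m / (ℓ t₀) := by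
        rw [le_div_iff₀ hl₀mem.1]
        nlinarith
      nlinarith [sq_nonneg m]
  -- integrability of the two integrands for every x ∈ (0,1]
  have hInt1 : ∀ x : ℝ, 0 < x → x ≤ 1 → Integrable (fun m : ℝ => m * x ^ m) μ₀ := by
    intro x hx hx1
    refine hIntm.mono (hcont1 x hx) ?_
    filter_upwards [hμpos] with m hm
    have h1 : (0:ℝ) ≤ m * x ^ m := mul_nonneg hm.le (Real.rpow_nonneg hx.le m)
    rw [Real.norm_eq_abs, Real.norm_eq_abs, abs_of_nonneg h1, abs_of_nonneg hm.le]
    calc m * x ^ m ≤ m * 1 := mul_le_mul_of_nonneg_left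
          (Real.rpow_le_one hx.le hx1 hm.le) hm.le
      _ = m := mul_one m
  have hInt2 : ∀ x : ℝ, 0 < x → x ≤ 1 → Integrable (fun m : ℝ => m ^ 2 * x ^ m) μ₀ := by
    intro x hx hx1
    refine hint.mono (hcont2 x hx) ?_
    filter_upwards [hμpos] with m hm
    have h1 : (0:ℝ) ≤ m ^ 2 * x ^ m := mul_nonneg (sq_nonneg m) (Real.rpow_nonneg hx.le m)
    rw [Real.norm_eq_abs, Real.norm_eq_abs, abs_of_nonneg h1, abs_of_nonneg (sq_nonneg m)]
    calc m ^ 2 * x ^ m ≤ m ^ 2 * 1 := mul_le_mul_of_nonneg_left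
          (Real.rpow_le_one hx.le hx1 hm.le) (sq_nonneg m)
      _ = m ^ 2 := mul_one _
  -- derivative of G on (0,1)
  have hderiv : ∀ x ∈ Set.Ioo (0:ℝ) 1,
      HasDerivAt (fun y => ∫ m, m * y ^ m ∂μ₀) ((∫ m, m ^ 2 * x ^ m ∂μ₀) / x) x := by
    intro x hx
    obtain ⟨hxp, hx1⟩ := hx
    set ε : ℝ := min (x/2) ((1-x)/2) with hεdef
    have hεpos : 0 < ε := by
      apply lt_min <;> linarith
    have hball : ∀ y ∈ Metric.ball x ε, x/2 < y ∧ y < (1+x)/2 := by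
      intro y hy
      simp only [Metric.mem_ball, Real.dist_eq, abs_lt] at hy
      have h1 : ε ≤ x/2 := min_le_left _ _
      have h2 : ε ≤ (1-x)/2 := min_le_right _ _
      constructor <;> linarith [hy.1, hy.2]
    have key := hasDerivAt_integral_of_dominated_loc_of_deriv_le (μ := μ₀)
      (F := fun y m => m * y ^ m) (F' := fun y m => m ^ 2 * y ^ (m - 1))
      (bound := fun m => m ^ 2 / (x/2)) (x₀ := x) (Metric.ball_mem_nhds x hεpos)
      (by
        filter_upwards [Ioo_mem_nhds hxp hx1] with y hy
        exact hcont1 y hy.1)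
      (hInt1 x hxp hx1.le)
      (by
        exact (((continuous_pow 2).mul
          (continuous_const.rpow (continuous_id.sub continuous_const)
            fun _ => Or.inl hxp.ne')).aestronglyMeasurable))
      (by
        filter_upwards [hμpos] with m hm y hy
        obtain ⟨hy1, hy2⟩ := hball y hy
        have hyp : 0 < y := by linarith
        have hy1' : y ≤ 1 := by linarith
        have hrw : y ^ (m - 1) = y ^ m / y := by
          rw [Real.rpow_sub hyp, Real.rpow_one]
        have h1 : (0:ℝ) ≤ m ^ 2 * y ^ (m-1) :=
          mul_nonneg (sq_nonneg m) (Real.rpow_nonneg hyp.le _)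
        rw [Real.norm_eq_abs, abs_of_nonneg h1, hrw]
        have hym : y ^ m ≤ 1 := Real.rpow_le_one hyp.le hy1' hm.le
        have hx2 : 0 < x/2 := by linarith
        calc m ^ 2 * (y ^ m / y) ≤ m ^ 2 * (1 / (x/2)) := by
              apply mul_le_mul_of_nonneg_left _ (sq_nonneg m)
              apply div_le_div₀ (by norm_num) hym hx2 hy1.le
          _ = m ^ 2 / (x/2) := by ring)
      (hint.div_const _)
      (by
        filter_upwards [hμpos] with m hm y hy
        obtain ⟨hy1, _⟩ := hball y hy
        have hyp : 0 < y := by linarith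
        have h := (Real.hasDerivAt_rpow_const (x := y) (p := m) (Or.inl hyp.ne')).const_mul m
        refine h.congr_deriv ?_
        ring)
    have heq : (fun m : ℝ => m ^ 2 * x ^ (m - 1)) = fun m : ℝ => m ^ 2 * x ^ m / x := by
      funext m
      rw [Real.rpow_sub hxp, Real.rpow_one]
      ring
    have h2 := key.2
    rw [heq] at h2
    rwa [integral_div] at h2
  -- H(ℓ t) = 1/t
  have hGeq : ∀ t, t > 1/K → (∫ m, m ^ 2 * (ℓ t) ^ m ∂μ₀) = 1 / t := by
    intro t ht
    obtain ⟨hmem, heq⟩ := hℓ t ht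
    have hd := hderiv (ℓ t) hmem
    have hgG : g₀ =ᶠ[𝓝 (ℓ t)] fun y => ∫ m, m * y ^ m ∂μ₀ := by
      filter_upwards [Ioo_mem_nhds hmem.1 hmem.2] with y hy
      exact hg₀ y ⟨hy.1.le, hy.2.le⟩
    rw [hgG.deriv_eq, hd.deriv] at heq
    rw [mul_comm, div_mul_cancel₀ _ hmem.1.ne'] at heq
    exact heq
  -- lower bounds via the support point m₀
  have hA : ∀ δ : ℝ, 0 < δ → ∃ c : ℝ, 0 < c ∧ ∀ x ∈ Set.Ioo (0:ℝ) 1,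
      c * x ^ (m₀ + δ) ≤ (∫ m, m ^ 2 * x ^ m ∂μ₀) ∧
      c / (m₀ + δ) * x ^ (m₀ + δ) ≤ ∫ m, m * x ^ m ∂μ₀ := by
    intro δ hδ
    set A : Set ℝ := Set.Ioo (m₀ - δ) (m₀ + δ) ∩ Set.Ioi 0 with hAdef
    have hAmeas : MeasurableSet A := measurableSet_Ioo.inter measurableSet_Ioi
    have hμA : μ₀ A ≠ 0 := by
      intro h0
      apply hm₀S δ hδ
      have hsub : Set.Ioo (m₀ - δ) (m₀ + δ) ⊆ A ∪ Set.Iic 0 := by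
        intro y hy
        rcases le_or_gt y 0 with h | h
        · exact Or.inr h
        · exact Or.inl ⟨hy, h⟩
      have := (measure_mono (μ := μ₀) hsub).trans (measure_union_le (μ := μ₀) _ _)
      rw [h0, hsupp] at this
      simpa using this
    set c : ℝ := ∫ m in A, m ^ 2 ∂μ₀ with hcdef
    have hc : 0 < c := by
      rw [hcdef, setIntegral_pos_iff_support_of_nonneg_ae
        (ae_of_all _ fun m => sq_nonneg m) hint.integrableOn]
      have hsub : A ⊆ Function.support fun m : ℝ => m ^ 2 := by
        intro y hy
        simp only [Function.mem_support]
        exact pow_ne_zero _ (ne_of_gt hy.2)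
      rw [inter_eq_self_of_subset_right hsub]
      exact hμA.bot_lt
    have hm₀δ : 0 < m₀ + δ := by linarith
    refine ⟨c, hc, fun x hx => ?_⟩
    obtain ⟨hxp, hx1⟩ := hx
    have hstep : c * x ^ (m₀ + δ) ≤ ∫ m in A, m ^ 2 * x ^ m ∂μ₀ := by
      have hrw : ∫ m in A, m ^ 2 * x ^ (m₀ + δ) ∂μ₀ = c * x ^ (m₀ + δ) :=
        integral_mul_const _ _
      rw [← hrw]
      apply setIntegral_mono_on (hint.mul_const _).integrableOn
        (hInt2 x hxp hx1.le).integrableOn hAmeas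
      intro m hm
      exact mul_le_mul_of_nonneg_left
        (Real.rpow_le_rpow_of_exponent_ge hxp hx1.le hm.1.2.le) (sq_nonneg m)
    have hcup : ∫ m in A, m ^ 2 * x ^ m ∂μ₀ ≤ ∫ m, m ^ 2 * x ^ m ∂μ₀ := by
      apply setIntegral_le_integral (hInt2 x hxp hx1.le)
      filter_upwards [hμpos] with m hm
      exact mul_nonneg (sq_nonneg m) (Real.rpow_nonneg hxp.le m)
    constructor
    · exact hstep.trans hcup
    · have hstep2 : ∫ m in A, m ^ 2 * x ^ m ∂μ₀ ≤ (m₀ + δ) * ∫ m in A, m * x ^ m ∂μ₀ := by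
        rw [← integral_const_mul]
        apply setIntegral_mono_on (hInt2 x hxp hx1.le).integrableOn
          ((hInt1 x hxp hx1.le).const_mul _).integrableOn hAmeas
        intro m hm
        have hm0 : 0 < m := hm.2
        have hmle : m ≤ m₀ + δ := hm.1.2.le
        have hrp : (0:ℝ) ≤ x ^ m := Real.rpow_nonneg hxp.le m
        nlinarith [mul_nonneg (sub_nonneg.mpr hmle) (mul_nonneg hm0.le hrp)]
      have hup2 : ∫ m in A, m * x ^ m ∂μ₀ ≤ ∫ m, m * x ^ m ∂μ₀ := by
        apply setIntegral_le_integral (hInt1 x hxp hx1.le)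
        filter_upwards [hμpos] with m hm
        exact mul_nonneg hm.le (Real.rpow_nonneg hxp.le m)
      rw [div_mul_eq_mul_div, div_le_iff₀ hm₀δ]
      calc c * x ^ (m₀ + δ) ≤ (m₀ + δ) * ∫ m in A, m * x ^ m ∂μ₀ := hstep.trans hstep2
        _ ≤ (m₀ + δ) * ∫ m, m * x ^ m ∂μ₀ := by
            exact mul_le_mul_of_nonneg_left hup2 hm₀δ.le
        _ = (∫ m, m * x ^ m ∂μ₀) * (m₀ + δ) := mul_comm _ _
  -- upper bound for H
  have hup : ∀ δ : ℝ, 0 < δ → ∀ x ∈ Set.Ioo (0:ℝ) 1,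
      (∫ m, m ^ 2 * x ^ m ∂μ₀) ≤ (m₀ + δ) * (∫ m, m * x ^ m ∂μ₀) + K * x ^ (m₀ + δ) := by
    intro δ hδ x hx
    obtain ⟨hxp, hx1⟩ := hx
    have h1a : Integrable (fun m : ℝ => (m₀ + δ) * (m * x ^ m)) μ₀ :=
      (hInt1 x hxp hx1.le).const_mul _
    have h1b : Integrable (fun m : ℝ => m ^ 2 * x ^ (m₀ + δ)) μ₀ := hint.mul_const _
    have hae : (fun m : ℝ => m ^ 2 * x ^ m) ≤ᵐ[μ₀]
        (fun m : ℝ => (m₀ + δ) * (m * x ^ m)) + fun m : ℝ => m ^ 2 * x ^ (m₀ + δ) := by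
      filter_upwards [hμpos] with m hm
      simp only [Pi.add_apply]
      have hrp : (0:ℝ) ≤ x ^ m := Real.rpow_nonneg hxp.le m
      have hrp2 : (0:ℝ) ≤ x ^ (m₀ + δ) := Real.rpow_nonneg hxp.le _
      rcases le_or_gt m (m₀ + δ) with h | h
      · have hh1 : m ^ 2 * x ^ m ≤ (m₀ + δ) * (m * x ^ m) := by
          nlinarith [mul_nonneg (sub_nonneg.mpr h) (mul_nonneg hm.le hrp)]
        have hh2 : (0:ℝ) ≤ m ^ 2 * x ^ (m₀ + δ) := mul_nonneg (sq_nonneg m) hrp2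
        linarith
      · have hx' : x ^ m ≤ x ^ (m₀ + δ) :=
          Real.rpow_le_rpow_of_exponent_ge hxp hx1.le h.le
        have hh1 : m ^ 2 * x ^ m ≤ m ^ 2 * x ^ (m₀ + δ) :=
          mul_le_mul_of_nonneg_left hx' (sq_nonneg m)
        have hh2 : (0:ℝ) ≤ (m₀ + δ) * (m * x ^ m) := by
          apply mul_nonneg (by linarith) (mul_nonneg hm.le hrp)
        linarith
    have h2 := integral_mono_ae (hInt2 x hxp hx1.le) (h1a.add h1b) hae
    simp only [Pi.add_apply] at h2
    rw [integral_add h1a h1b, integral_const_mul, integral_mul_const, hK] at h2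
    exact h2
  -- lower bound m₀ G ≤ H
  have hlow : ∀ x ∈ Set.Ioo (0:ℝ) 1,
      m₀ * (∫ m, m * x ^ m ∂μ₀) ≤ ∫ m, m ^ 2 * x ^ m ∂μ₀ := by
    intro x hx
    rw [← integral_const_mul]
    apply integral_mono_ae ((hInt1 x hx.1 hx.2.le).const_mul _) (hInt2 x hx.1 hx.2.le)
    filter_upwards [hμpos, haege] with m hm1 hm2
    have hrp : (0:ℝ) ≤ x ^ m := Real.rpow_nonneg hx.1.le m
    nlinarith [mul_nonneg (sub_nonneg.mpr hm2) (mul_nonneg hm1.le hrp)]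
  -- ℓ tends to 0
  obtain ⟨c₁, hc₁, hbd1⟩ := hA 1 one_pos
  have hl0 : Tendsto ℓ atTop (𝓝 0) := by
    rw [tendsto_order]
    constructor
    · intro a ha
      filter_upwards [eventually_gt_atTop (1/K)] with t ht
      exact lt_trans ha (hℓ t ht).1.1
    · intro b hb
      set ε : ℝ := min b (1/2) with hεdef
      have hε : 0 < ε := lt_min hb (by norm_num)
      have hεK : (0:ℝ) < c₁ * ε ^ (m₀ + 1) := by
        apply mul_pos hc₁ (Real.rpow_pos_of_pos hε _)
      filter_upwards [eventually_gt_atTop (max (1/K) (1/(c₁ * ε ^ (m₀ + 1))))] with t ht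
      rw [max_lt_iff] at ht
      obtain ⟨htK, htc⟩ := ht
      by_contra hcon
      push_neg at hcon
      have hmem := (hℓ t htK).1
      have hε' : ε ≤ ℓ t := le_trans (min_le_left _ _) hcon
      have h1 := (hbd1 (ℓ t) hmem).1
      rw [hGeq t htK] at h1
      have h2 : ε ^ (m₀ + 1) ≤ (ℓ t) ^ (m₀ + 1) :=
        Real.rpow_le_rpow hε.le hε' (by linarith)
      have h3 : c₁ * ε ^ (m₀ + 1) ≤ 1 / t := by
        calc c₁ * ε ^ (m₀ + 1) ≤ c₁ * (ℓ t) ^ (m₀ + 1) :=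
              mul_le_mul_of_nonneg_left h2 hc₁.le
          _ ≤ 1 / t := h1
      have htpos : 0 < t := lt_trans (by positivity) htK
      rw [le_div_iff₀ htpos] at h3
      rw [div_lt_iff₀ hεK] at htc
      nlinarith
  -- rewrite the goal function eventually
  have hKinv : (0:ℝ) < 1/K := by positivity
  have hfeq : ∀ᶠ t in atTop, 1 / (t * g₀ (ℓ t)) =
      (∫ m, m ^ 2 * (ℓ t) ^ m ∂μ₀) / (∫ m, m * (ℓ t) ^ m ∂μ₀) ∧
      0 < (∫ m, m * (ℓ t) ^ m ∂μ₀) ∧ ℓ t ∈ Set.Ioo (0:ℝ) 1 := by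
    filter_upwards [eventually_gt_atTop (1/K)] with t ht
    have hmem := (hℓ t ht).1
    have hGpos : 0 < ∫ m, m * (ℓ t) ^ m ∂μ₀ := by
      have := (hbd1 (ℓ t) hmem).2
      have h0 : 0 < c₁ / (m₀ + 1) * (ℓ t) ^ (m₀ + 1) := by
        apply mul_pos (div_pos hc₁ (by linarith)) (Real.rpow_pos_of_pos hmem.1 _)
      linarith
    refine ⟨?_, hGpos, hmem⟩
    rw [hg₀ (ℓ t) ⟨hmem.1.le, hmem.2.le⟩, ← div_div, hGeq t ht]
  rw [tendsto_order]
  constructor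
  · intro a ha
    filter_upwards [hfeq] with t ⟨heq, hGpos, hmem⟩
    rw [heq]
    have := hlow (ℓ t) hmem
    rw [lt_div_iff₀ hGpos]
    nlinarith
  · intro b hb
    set δ : ℝ := (b - m₀) / 2 with hδdef
    have hδ : 0 < δ := by rw [hδdef]; linarith
    obtain ⟨c₂, hc₂, hbd2⟩ := hA (δ/2) (by linarith)
    set c' : ℝ := c₂ / (m₀ + δ/2) with hc'def
    have hc' : 0 < c' := div_pos hc₂ (by linarith)
    -- smallness of the error term
    have hsm : Tendsto (fun t => K / c' * (ℓ t) ^ (δ/2)) atTop (𝓝 0) := by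
      have hcont : ContinuousAt (fun x : ℝ => K / c' * x ^ (δ/2)) 0 := by
        apply ContinuousAt.mul continuousAt_const
        exact Real.continuousAt_rpow_const 0 (δ/2) (Or.inr (by linarith))
      have h0 : K / c' * (0:ℝ) ^ (δ/2) = 0 := by
        rw [Real.zero_rpow (by linarith : δ/2 ≠ 0)]
        ring
      have := hcont.tendsto.comp hl0
      rw [h0] at this
      exact this
    have hsmall : ∀ᶠ t in atTop, K / c' * (ℓ t) ^ (δ/2) < δ :=
      hsm.eventually_lt_const hδ
    filter_upwards [hfeq, hsmall] with t ⟨heq, hGpos, hmem⟩ hsm'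
    rw [heq]
    obtain ⟨hxp, hx1⟩ := hmem
    set x := ℓ t
    set Gt : ℝ := ∫ m, m * x ^ m ∂μ₀ with hGtdef
    set Ht : ℝ := ∫ m, m ^ 2 * x ^ m ∂μ₀ with hHtdef
    have hup' : Ht ≤ (m₀ + δ) * Gt + K * x ^ (m₀ + δ) := hup δ hδ x ⟨hxp, hx1⟩
    have hGlow : c' * x ^ (m₀ + δ/2) ≤ Gt := (hbd2 x ⟨hxp, hx1⟩).2
    -- error term estimate
    have hxs : (0:ℝ) < x ^ (m₀ + δ/2) := Real.rpow_pos_of_pos hxp _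
    have herr : K * x ^ (m₀ + δ) / Gt ≤ K / c' * x ^ (δ/2) := by
      have hsplit : x ^ (m₀ + δ) = x ^ (m₀ + δ/2) * x ^ (δ/2) := by
        rw [← Real.rpow_add hxp]
        ring_nf
      have h1 : K * x ^ (m₀ + δ) / Gt ≤ K * x ^ (m₀ + δ) / (c' * x ^ (m₀ + δ/2)) := by
        apply div_le_div_of_nonneg_left _ (by positivity) hGlow
        positivity
      calc K * x ^ (m₀ + δ) / Gt ≤ K * x ^ (m₀ + δ) / (c' * x ^ (m₀ + δ/2)) := h1
        _ = K / c' * x ^ (δ/2) := by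
            rw [hsplit, mul_comm c' (x ^ (m₀ + δ/2))]
            rw [mul_comm K (x ^ (m₀ + δ/2) * x ^ (δ/2)), mul_assoc]
            rw [mul_div_mul_left _ _ hxs.ne']
            ring
    have hfinal : Ht / Gt ≤ (m₀ + δ) + K * x ^ (m₀ + δ) / Gt := by
      calc Ht / Gt ≤ ((m₀ + δ) * Gt + K * x ^ (m₀ + δ)) / Gt := by
            gcongr
        _ = (m₀ + δ) + K * x ^ (m₀ + δ) / Gt := by
            rw [add_div, mul_div_assoc, div_self hGpos.ne', mul_one]
    have : Ht / Gt < m₀ + δ + δ := by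
      calc Ht / Gt ≤ (m₀ + δ) + K * x ^ (m₀ + δ) / Gt := hfinal
        _ ≤ (m₀ + δ) + K / c' * x ^ (δ/2) := by linarith [herr]
        _ < m₀ + δ + δ := by linarith [hsm']
    have hbeq : m₀ + δ + δ = b := by rw [hδdef]; ring
    rwa [hbeq] at this
end

section
/- Let μ₀ be a nonzero non-negative finite measure on (0,∞) with M₀ = ∫ m dμ₀ ∈ (0,∞), K = ∫ m² dμ₀ ∈ (0,∞], g₀(x) = ∫ m x^m dμ₀, and define φ_t(x) = x e^{t(M₀ − g₀(x))} for t ≥ 0, x ∈ [0,1]. Then for t ≤ 1/K (interpreting 1/∞ = 0), φ_t is strictly increasing on [0,1]; and for t > 1/K there is a unique m_t ∈ (0,1) with t m_t g₀'(m_t) = 1, φ_t is increasing on [0, m_t] and decreasing on [m_t, 1]. -/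
open MeasureTheory Set Filter Topology ENNReal

lemma aux_mb (b : ℝ) (hb : b ∈ Set.Ioo (0:ℝ) 1) (m : ℝ) (hm : 0 < m) :
    m * b ^ m ≤ (-Real.log b)⁻¹ := by
  have hlb : Real.log b < 0 := Real.log_neg hb.1 hb.2
  have hcpos : 0 < -Real.log b := by linarith
  set c := -Real.log b with hc
  have hbm : b ^ m = Real.exp (-(c * m)) := by
    rw [← Real.exp_log hb.1, ← Real.exp_mul]; ring_nf; rw [hc]; ring_nf
  have h1 : c * m ≤ Real.exp (c * m) := (Real.add_one_le_exp _).trans' (by linarith)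
  rw [hbm, Real.exp_neg]
  calc m * (Real.exp (c*m))⁻¹ ≤ m * (c*m)⁻¹ := by
        apply mul_le_mul_of_nonneg_left _ hm.le
        exact inv_anti₀ (by positivity) h1
    _ = c⁻¹ := by field_simp

lemma aux_meas (x : ℝ) (hx : 0 < x) : Measurable (fun m : ℝ => x ^ m) := by
  have : (fun m : ℝ => x ^ m) = fun m => Real.exp (Real.log x * m) := by
    funext m; rw [Real.rpow_def_of_pos hx]
  rw [this]
  exact Real.measurable_exp.comp (measurable_id.const_mul _)

set_option maxHeartbeats 2000000 in
/-- With `φ_t(x) = x e^{t(M₀ - g₀(x))}`: for `t ≤ 1/K` (with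
`1/∞ = 0`), `φ_t` is strictly increasing on `[0,1]`; for `t > 1/K` there is a
unique `m_t ∈ (0,1)` with `t m_t g₀'(m_t) = 1`, and `φ_t` is increasing on
`[0,m_t]` and decreasing on `[m_t,1]`. -/
theorem stmt_5 (μ₀ : Measure ℝ) [IsFiniteMeasure μ₀] (hμ₀ : μ₀ ≠ 0)
    (hsupp : μ₀ (Set.Iic (0:ℝ)) = 0)
    (M₀ : ℝ) (hM₀pos : 0 < M₀)
    (hintm : Integrable (fun m : ℝ => m) μ₀)
    (hM₀ : ∫ m, m ∂μ₀ = M₀)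
    (K : ℝ≥0∞) (hKpos : 0 < K)
    (hK : ∫⁻ m, ENNReal.ofReal (m ^ 2) ∂μ₀ = K)
    (g₀ : ℝ → ℝ)
    (hg₀ : ∀ x ∈ Set.Icc (0:ℝ) 1, g₀ x = ∫ m, m * x ^ m ∂μ₀)
    (φ : ℝ → ℝ → ℝ)
    (hφ : ∀ t x, φ t x = x * Real.exp (t * (M₀ - g₀ x))) :
    (∀ t, 0 ≤ t → t ≤ (K⁻¹).toReal → StrictMonoOn (φ t) (Set.Icc (0:ℝ) 1)) ∧
    (∀ t, (K⁻¹).toReal < t →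
      ∃! mt, mt ∈ Set.Ioo (0:ℝ) 1 ∧ t * mt * deriv g₀ mt = 1 ∧
        StrictMonoOn (φ t) (Set.Icc (0:ℝ) mt) ∧
        StrictAntiOn (φ t) (Set.Icc mt 1)) := by
  classical
  -- a.e. positivity
  have hae : ∀ᵐ m ∂μ₀, 0 < m := by
    rw [ae_iff]
    convert hsupp using 2
    ext m; simp [not_lt]
  have huniv : 0 < μ₀ Set.univ := by
    simpa [Measure.measure_univ_pos] using hμ₀
  set h : ℝ → ℝ := fun x => ∫ m, m ^ 2 * x ^ m ∂μ₀ with hhdef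
  -- integrability of m ↦ m^2 x^m for x in (0,1)
  have hint2 : ∀ x ∈ Set.Ioo (0:ℝ) 1, Integrable (fun m : ℝ => m ^ 2 * x ^ m) μ₀ := by
    intro x hx
    apply Integrable.mono (hintm.const_mul (-Real.log x)⁻¹)
      ((measurable_id.pow_const 2).mul (aux_meas x hx.1)).aestronglyMeasurable
    filter_upwards [hae] with m hm
    have h1 := aux_mb x hx m hm
    have h2 : (0:ℝ) < x ^ m := Real.rpow_pos_of_pos hx.1 m
    have h3 : (0:ℝ) < (-Real.log x)⁻¹ := lt_of_lt_of_le (by nlinarith) h1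
    show ‖m ^ 2 * x ^ m‖ ≤ ‖(-Real.log x)⁻¹ * m‖
    rw [Real.norm_eq_abs, Real.norm_eq_abs, abs_of_nonneg (mul_nonneg (sq_nonneg m) h2.le),
      abs_of_nonneg (mul_pos h3 hm).le]
    calc m ^ 2 * x ^ m = m * (m * x ^ m) := by ring
      _ ≤ m * (-Real.log x)⁻¹ := mul_le_mul_of_nonneg_left h1 hm.le
      _ = (-Real.log x)⁻¹ * m := mul_comm _ _
  -- integrability of m ↦ m x^m for x in [0,1]
  have hint1 : ∀ x ∈ Set.Icc (0:ℝ) 1, Integrable (fun m : ℝ => m * x ^ m) μ₀ := by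
    intro x hx
    rcases eq_or_lt_of_le hx.1 with rfl | hx0
    · apply (integrable_zero _ _ _).congr
      filter_upwards [hae] with m hm
      simp [Real.zero_rpow hm.ne']
    · apply Integrable.mono hintm (measurable_id.mul (aux_meas x hx0)).aestronglyMeasurable
      filter_upwards [hae] with m hm
      have h1 : x ^ m ≤ 1 := Real.rpow_le_one hx.1 hx.2 hm.le
      have h2 : (0:ℝ) < x ^ m := Real.rpow_pos_of_pos hx0 m
      show ‖m * x ^ m‖ ≤ ‖m‖
      rw [Real.norm_eq_abs, Real.norm_eq_abs, abs_of_nonneg (mul_nonneg hm.le h2.le),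
        abs_of_nonneg hm.le]
      calc m * x ^ m ≤ m * 1 := mul_le_mul_of_nonneg_left h1 hm.le
        _ = m := mul_one m
  -- derivative of g₀
  have hderiv : ∀ x ∈ Set.Ioo (0:ℝ) 1, HasDerivAt g₀ (h x / x) x := by
    intro x₀ hx₀
    set a : ℝ := x₀ / 2 with hadef
    set b : ℝ := (x₀ + 1) / 2 with hbdef
    have ha0 : 0 < a := by simp only [hadef]; linarith [hx₀.1]
    have hab : a < x₀ := by simp only [hadef]; linarith [hx₀.1]
    have hxb : x₀ < b := by simp only [hbdef]; linarith [hx₀.2]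
    have hb1 : b < 1 := by simp only [hbdef]; linarith [hx₀.2]
    have hb : b ∈ Set.Ioo (0:ℝ) 1 := ⟨lt_trans (lt_trans ha0 hab) hxb, hb1⟩
    set ε : ℝ := min (x₀ - a) (b - x₀) with hεdef
    have hε : 0 < ε := lt_min (by linarith) (by linarith)
    have hball : Metric.ball x₀ ε ⊆ Set.Icc a b := by
      intro z hz
      rw [Metric.mem_ball, Real.dist_eq, abs_lt] at hz
      constructor
      · have := min_le_left (x₀ - a) (b - x₀); simp only [hεdef] at hz; linarith [hz.1]
      · have := min_le_right (x₀ - a) (b - x₀); simp only [hεdef] at hz; linarith [hz.2]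
    have key := hasDerivAt_integral_of_dominated_loc_of_deriv_le
      (F := fun (x : ℝ) (m : ℝ) => m * x ^ m)
      (F' := fun (x : ℝ) (m : ℝ) => m * (m * x ^ (m - 1)))
      (bound := fun m : ℝ => (-Real.log b)⁻¹ * m / a)
      (μ := μ₀) (x₀ := x₀) (s := Metric.ball x₀ ε) (Metric.ball_mem_nhds x₀ hε) ?_ (hint1 x₀ (Set.Ioo_subset_Icc_self hx₀)) ?_ ?_ ?_ ?_
    · have hG := key.2
      have e : (∫ m, m * (m * x₀ ^ (m - 1)) ∂μ₀) = h x₀ / x₀ := by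
        simp only [hhdef, ← integral_div]
        apply integral_congr_ae
        filter_upwards [hae] with m hm
        rw [Real.rpow_sub_one (ne_of_gt hx₀.1)]
        ring
      rw [e] at hG
      apply hG.congr_of_eventuallyEq
      filter_upwards [Ioo_mem_nhds hx₀.1 hx₀.2] with y hy using hg₀ y (Set.Ioo_subset_Icc_self hy)
    · -- measurability of F x near x₀
      filter_upwards [Ioo_mem_nhds hx₀.1 hx₀.2] with x hx
      exact (measurable_id.mul (aux_meas x hx.1)).aestronglyMeasurable
    · -- measurability of F' x₀
      exact (measurable_id.mul (measurable_id.mul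
        ((aux_meas x₀ hx₀.1).comp (measurable_id.sub measurable_const)))).aestronglyMeasurable
    · -- bound
      filter_upwards [hae] with m hm
      intro x hx
      obtain ⟨hxa, hxb'⟩ := hball hx
      have hx0 : 0 < x := lt_of_lt_of_le ha0 hxa
      have h1 : x ^ m ≤ b ^ m := Real.rpow_le_rpow hx0.le hxb' hm.le
      have h2 := aux_mb b hb m hm
      have h3 : (0:ℝ) < x ^ m := Real.rpow_pos_of_pos hx0 m
      have hlogb : (0:ℝ) < (-Real.log b)⁻¹ := by
        have := Real.log_neg hb.1 hb.2
        exact inv_pos.2 (by linarith)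
      rw [Real.rpow_sub_one (ne_of_gt hx0), Real.norm_eq_abs, abs_of_nonneg (by positivity)]
      calc m * (m * (x ^ m / x)) = m ^ 2 * x ^ m / x := by ring
        _ ≤ m ^ 2 * b ^ m / a := by
            have hbm : (0:ℝ) < b ^ m := Real.rpow_pos_of_pos hb.1 m
            exact div_le_div₀ (by nlinarith) (by nlinarith) ha0 hxa
        _ = m * (m * b ^ m) / a := by ring
        _ ≤ m * (-Real.log b)⁻¹ / a :=
            div_le_div₀ (mul_nonneg hm.le hlogb.le)
              (mul_le_mul_of_nonneg_left h2 hm.le) ha0 le_rfl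
        _ = (-Real.log b)⁻¹ * m / a := by ring
    · -- bound integrable
      exact (hintm.const_mul _).div_const _
    · -- differentiability
      filter_upwards [hae] with m hm
      intro x hx
      have hx0 : 0 < x := lt_of_lt_of_le ha0 (hball hx).1
      exact (Real.hasDerivAt_rpow_const (Or.inl (ne_of_gt hx0))).const_mul m
  -- strict monotonicity of h on (0,1)
  have hhmono : ∀ x ∈ Set.Ioo (0:ℝ) 1, ∀ y ∈ Set.Ioo (0:ℝ) 1, x < y → h x < h y := by
    intro x hx y hy hxy
    have hix := hint2 x hx
    have hiy := hint2 y hy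
    have hpos : ∀ᵐ m ∂μ₀, 0 < m ^ 2 * y ^ m - m ^ 2 * x ^ m := by
      filter_upwards [hae] with m hm
      have h1 : x ^ m < y ^ m := Real.rpow_lt_rpow hx.1.le hxy hm
      nlinarith [pow_pos hm 2]
    have hposint : 0 < ∫ m, (m ^ 2 * y ^ m - m ^ 2 * x ^ m) ∂μ₀ := by
      rw [integral_pos_iff_support_of_nonneg_ae (hpos.mono fun m hm => hm.le) (hiy.sub hix)]
      have hnull : μ₀ {m | ¬ 0 < m ^ 2 * y ^ m - m ^ 2 * x ^ m} = 0 := by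
        rw [← ae_iff]; exact hpos
      have hsubc : (Function.support fun m => m ^ 2 * y ^ m - m ^ 2 * x ^ m)ᶜ ⊆
          {m | ¬ 0 < m ^ 2 * y ^ m - m ^ 2 * x ^ m} := by
        intro m hm
        simp only [Function.mem_support, not_not, Set.mem_compl_iff] at hm
        simp only [Set.mem_setOf_eq, hm, lt_irrefl, not_false_iff]
      have hcnull : μ₀ (Function.support fun m => m ^ 2 * y ^ m - m ^ 2 * x ^ m)ᶜ = 0 :=
        measure_mono_null hsubc hnull
      by_contra hcon
      push_neg at hcon
      have h0 : μ₀ (Function.support fun m => m ^ 2 * y ^ m - m ^ 2 * x ^ m) = 0 :=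
        le_antisymm hcon zero_le
      have := measure_union_le (μ := μ₀)
        (Function.support fun m => m ^ 2 * y ^ m - m ^ 2 * x ^ m)
        (Function.support fun m => m ^ 2 * y ^ m - m ^ 2 * x ^ m)ᶜ
      rw [Set.union_compl_self, h0, hcnull] at this
      simp only [add_zero, nonpos_iff_eq_zero] at this
      exact absurd this huniv.ne'
    rw [integral_sub hiy hix] at hposint
    simp only [hhdef]
    linarith
  -- continuity of h on (0,1)
  have hconth : ∀ x ∈ Set.Ioo (0:ℝ) 1, ContinuousAt h x := by
    intro x₀ hx₀
    set b : ℝ := (x₀ + 1) / 2 with hbdef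
    have hb : b ∈ Set.Ioo (0:ℝ) 1 := ⟨by simp only [hbdef]; linarith [hx₀.1], by
      simp only [hbdef]; linarith [hx₀.2]⟩
    have hx₀b : x₀ < b := by simp only [hbdef]; linarith [hx₀.2]
    have hS : Set.Ioo (0:ℝ) b ∈ nhds x₀ := Ioo_mem_nhds hx₀.1 hx₀b
    have key : Tendsto (fun x => ∫ m, m ^ 2 * x ^ m ∂μ₀) (nhds x₀)
        (nhds (∫ m, m ^ 2 * x₀ ^ m ∂μ₀)) := by
      apply tendsto_integral_filter_of_dominated_convergence (fun m : ℝ => (-Real.log b)⁻¹ * m)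
      · filter_upwards [hS] with x hx
        exact ((measurable_id.pow_const 2).mul (aux_meas x hx.1)).aestronglyMeasurable
      · filter_upwards [hS] with x hx
        filter_upwards [hae] with m hm
        have h1 : x ^ m ≤ b ^ m := Real.rpow_le_rpow hx.1.le hx.2.le hm.le
        have h2 := aux_mb b hb m hm
        have h3 : (0:ℝ) < x ^ m := Real.rpow_pos_of_pos hx.1 m
        rw [Real.norm_eq_abs, abs_of_nonneg (by positivity)]
        calc m ^ 2 * x ^ m ≤ m ^ 2 * b ^ m := by nlinarith
          _ = m * (m * b ^ m) := by ring
          _ ≤ m * (-Real.log b)⁻¹ := mul_le_mul_of_nonneg_left h2 hm.le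
          _ = (-Real.log b)⁻¹ * m := mul_comm _ _
      · exact hintm.const_mul _
      · filter_upwards [hae] with m hm
        exact (continuousAt_const.mul
          (Real.continuousAt_rpow_const x₀ m (Or.inl hx₀.1.ne'))).tendsto
    exact key
  -- h tends to 0 at 0+
  have hh0 : Tendsto h (nhdsWithin 0 (Set.Ioi 0)) (nhds 0) := by
    have hb : (1/2 : ℝ) ∈ Set.Ioo (0:ℝ) 1 := by norm_num
    have hS : Set.Ioo (0:ℝ) (1/2) ∈ nhdsWithin (0:ℝ) (Set.Ioi 0) :=
      Ioo_mem_nhdsGT_of_mem ⟨le_rfl, by norm_num⟩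
    have key : Tendsto (fun x => ∫ m, m ^ 2 * x ^ m ∂μ₀) (nhdsWithin 0 (Set.Ioi 0))
        (nhds (∫ (_ : ℝ), (0:ℝ) ∂μ₀)) := by
      apply tendsto_integral_filter_of_dominated_convergence
        (fun m : ℝ => (-Real.log (1/2))⁻¹ * m)
      · filter_upwards [hS] with x hx
        exact ((measurable_id.pow_const 2).mul (aux_meas x hx.1)).aestronglyMeasurable
      · filter_upwards [hS] with x hx
        filter_upwards [hae] with m hm
        have h1 : x ^ m ≤ (1/2 : ℝ) ^ m := Real.rpow_le_rpow hx.1.le hx.2.le hm.le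
        have h2 := aux_mb (1/2) hb m hm
        have h3 : (0:ℝ) < x ^ m := Real.rpow_pos_of_pos hx.1 m
        rw [Real.norm_eq_abs, abs_of_nonneg (by positivity)]
        calc m ^ 2 * x ^ m ≤ m ^ 2 * (1/2:ℝ) ^ m := by nlinarith
          _ = m * (m * (1/2:ℝ) ^ m) := by ring
          _ ≤ m * (-Real.log (1/2))⁻¹ := mul_le_mul_of_nonneg_left h2 hm.le
          _ = (-Real.log (1/2))⁻¹ * m := mul_comm _ _
      · exact hintm.const_mul _
      · filter_upwards [hae] with m hm
        have hc : ContinuousWithinAt (fun x : ℝ => m ^ 2 * x ^ m) (Set.Ioi 0) 0 :=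
          (continuousAt_const.mul
            (Real.continuousAt_rpow_const 0 m (Or.inr hm.le))).continuousWithinAt
        have := hc.tendsto
        simpa [Real.zero_rpow hm.ne'] using this
    simpa using key
  -- h dominated by K
  have hhK : ∀ x ∈ Set.Ioo (0:ℝ) 1, ENNReal.ofReal (h x) ≤ K := by
    intro x hx
    have hnn : 0 ≤ᵐ[μ₀] fun m : ℝ => m ^ 2 * x ^ m := by
      filter_upwards [hae] with m hm
      have := Real.rpow_pos_of_pos hx.1 m
      positivity
    have : ENNReal.ofReal (h x) = ∫⁻ m, ENNReal.ofReal (m ^ 2 * x ^ m) ∂μ₀ :=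
      ofReal_integral_eq_lintegral_ofReal (hint2 x hx) hnn
    rw [this, ← hK]
    apply lintegral_mono_ae
    filter_upwards [hae] with m hm
    apply ENNReal.ofReal_le_ofReal
    have h1 : x ^ m ≤ 1 := Real.rpow_le_one hx.1.le hx.2.le hm.le
    have h2 : (0:ℝ) < x ^ m := Real.rpow_pos_of_pos hx.1 m
    nlinarith [sq_nonneg m]
  -- h gets arbitrarily close to K
  have hhsup : ∀ c : ℝ, ENNReal.ofReal c < K → ∃ x ∈ Set.Ioo (0:ℝ) 1, c < h x := by
    intro c hc
    by_contra hcon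
    push_neg at hcon
    set u : ℕ → ℝ := fun n => 1 - 1 / (n + 2) with hu
    have humem : ∀ n : ℕ, u n ∈ Set.Ioo (0:ℝ) 1 := by
      intro n
      have hn2 : (2:ℝ) ≤ (n:ℝ) + 2 := by
        have := Nat.cast_nonneg (α := ℝ) n
        linarith
      have h1 : 1 / ((n:ℝ) + 2) ≤ 1 / 2 := one_div_le_one_div_of_le (by norm_num) hn2
      have h2 : 0 < 1 / ((n:ℝ) + 2) := by positivity
      constructor <;> simp only [hu] <;> linarith
    have humono : Monotone u := by
      intro i j hij
      simp only [hu]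
      have hcast : (i:ℝ) ≤ (j:ℝ) := Nat.cast_le.mpr hij
      have h1 : 1 / ((j:ℝ) + 2) ≤ 1 / ((i:ℝ) + 2) :=
        one_div_le_one_div_of_le (by positivity) (by linarith)
      linarith
    have hulim : Tendsto u atTop (nhds 1) := by
      have ha : Tendsto (fun n : ℕ => (n:ℝ) + 2) atTop atTop :=
        tendsto_atTop_add_const_right _ 2 tendsto_natCast_atTop_atTop
      have h0 : Tendsto (fun n : ℕ => 1 / ((n:ℝ) + 2)) atTop (nhds 0) := by
        simpa [one_div, Function.comp_def] using tendsto_inv_atTop_zero.comp ha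
      have := tendsto_const_nhds (x := (1:ℝ)) (f := atTop (α := ℕ)) |>.sub h0
      simpa [hu, one_div] using this
    have key : Tendsto (fun n => ∫⁻ m, ENNReal.ofReal (m ^ 2 * (u n) ^ m) ∂μ₀) atTop
        (nhds (∫⁻ m, ENNReal.ofReal (m ^ 2) ∂μ₀)) := by
      apply lintegral_tendsto_of_tendsto_of_monotone
      · intro n
        exact (ENNReal.measurable_ofReal.comp
          ((measurable_id.pow_const 2).mul (aux_meas _ (humem n).1))).aemeasurable
      · filter_upwards [hae] with m hm
        intro i j hij
        apply ENNReal.ofReal_le_ofReal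
        have h1 : (u i) ^ m ≤ (u j) ^ m :=
          Real.rpow_le_rpow (humem i).1.le (humono hij) hm.le
        nlinarith [sq_nonneg m]
      · filter_upwards [hae] with m hm
        have hcont : ContinuousAt (fun x : ℝ => ENNReal.ofReal (m ^ 2 * x ^ m)) 1 :=
          ENNReal.continuous_ofReal.continuousAt.comp
            (continuousAt_const.mul (Real.continuousAt_rpow_const 1 m (Or.inl one_ne_zero)))
        have := (hcont.tendsto).comp hulim
        simpa [Real.one_rpow, Function.comp_def] using this
    rw [hK] at key
    have hle : ∀ n, ∫⁻ m, ENNReal.ofReal (m ^ 2 * (u n) ^ m) ∂μ₀ ≤ ENNReal.ofReal c := by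
      intro n
      have hnn : 0 ≤ᵐ[μ₀] fun m : ℝ => m ^ 2 * (u n) ^ m := by
        filter_upwards [hae] with m hm
        have := Real.rpow_pos_of_pos (humem n).1 m
        positivity
      rw [← ofReal_integral_eq_lintegral_ofReal (hint2 _ (humem n)) hnn]
      exact ENNReal.ofReal_le_ofReal (hcon _ (humem n))
    have hfin := le_of_tendsto key (Filter.Eventually.of_forall hle)
    exact absurd (lt_of_lt_of_le hc hfin) (lt_irrefl _)
  -- continuity of g₀ on [0,1]
  have hcontg : ContinuousOn g₀ (Set.Icc (0:ℝ) 1) := by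
    intro x₀ hx₀
    have key : Tendsto (fun x => ∫ m, m * x ^ m ∂μ₀) (nhdsWithin x₀ (Set.Icc 0 1))
        (nhds (∫ m, m * x₀ ^ m ∂μ₀)) := by
      apply tendsto_integral_filter_of_dominated_convergence (fun m : ℝ => m)
      · filter_upwards [self_mem_nhdsWithin] with x hx
        rcases eq_or_lt_of_le hx.1 with rfl | hx0
        · apply aestronglyMeasurable_const.congr (f := fun _ : ℝ => (0:ℝ))
          filter_upwards [hae] with m hm
          simp [Real.zero_rpow hm.ne']
        · exact (measurable_id.mul (aux_meas x hx0)).aestronglyMeasurable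
      · filter_upwards [self_mem_nhdsWithin] with x hx
        filter_upwards [hae] with m hm
        have h1 : x ^ m ≤ 1 := Real.rpow_le_one hx.1 hx.2 hm.le
        have h2 : (0:ℝ) ≤ x ^ m := Real.rpow_nonneg hx.1 m
        rw [Real.norm_eq_abs, abs_of_nonneg (by positivity)]
        nlinarith
      · exact hintm
      · filter_upwards [hae] with m hm
        have hc : ContinuousAt (fun x : ℝ => m * x ^ m) x₀ :=
          continuousAt_const.mul (Real.continuousAt_rpow_const x₀ m (Or.inr hm.le))
        exact hc.continuousWithinAt
    have : ContinuousWithinAt g₀ (Set.Icc (0:ℝ) 1) x₀ := by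
      show Tendsto g₀ _ _
      rw [hg₀ x₀ hx₀]
      apply Filter.Tendsto.congr' _ key
      filter_upwards [self_mem_nhdsWithin] with x hx using (hg₀ x hx).symm
    exact this
  -- continuity of φ t on [0,1]
  have hcontφ : ∀ t, ContinuousOn (φ t) (Set.Icc (0:ℝ) 1) := by
    intro t
    have : ∀ x ∈ Set.Icc (0:ℝ) 1, φ t x = x * Real.exp (t * (M₀ - g₀ x)) := fun x _ => hφ t x
    refine ContinuousOn.congr ?_ this
    have hc1 : ContinuousOn (fun x : ℝ => t * (M₀ - g₀ x)) (Set.Icc (0:ℝ) 1) :=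
      continuousOn_const.mul (continuousOn_const.sub hcontg)
    exact continuousOn_id.mul (Real.continuous_exp.comp_continuousOn hc1)
  -- derivative of φ t
  have hφd : ∀ t, ∀ x ∈ Set.Ioo (0:ℝ) 1,
      HasDerivAt (φ t) (Real.exp (t * (M₀ - g₀ x)) * (1 - t * h x)) x := by
    intro t x hx
    have hg := hderiv x hx
    have h1 : HasDerivAt (fun y => t * (M₀ - g₀ y)) (t * (0 - h x / x)) x :=
      ((hasDerivAt_const x M₀).sub hg).const_mul t
    have h2 := h1.exp
    have h3 := (hasDerivAt_id x).mul h2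
    have hfeq : φ t = fun y => y * Real.exp (t * (M₀ - g₀ y)) := funext (hφ t)
    rw [hfeq]
    refine h3.congr_deriv ?_
    have hx0 : x ≠ 0 := ne_of_gt hx.1
    have e : id x * (h x / x) = h x := by simp only [id_eq]; field_simp
    linear_combination (-(Real.exp (t * (M₀ - g₀ x)) * t)) * e
  -- monotonicity criterion
  have hmonocrit : ∀ t, ∀ a b : ℝ, 0 ≤ a → b ≤ 1 →
      (∀ x ∈ Set.Ioo a b, t * h x < 1) → StrictMonoOn (φ t) (Set.Icc a b) := by
    intro t a b ha hb hcrit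
    apply strictMonoOn_of_deriv_pos (convex_Icc a b) ((hcontφ t).mono (Set.Icc_subset_Icc ha hb))
    intro x hx
    rw [interior_Icc] at hx
    have hxm : x ∈ Set.Ioo (0:ℝ) 1 := ⟨lt_of_le_of_lt ha hx.1, lt_of_lt_of_le hx.2 hb⟩
    rw [(hφd t x hxm).deriv]
    have := hcrit x hx
    exact mul_pos (Real.exp_pos _) (by linarith)
  have hanticrit : ∀ t, ∀ a b : ℝ, 0 ≤ a → b ≤ 1 →
      (∀ x ∈ Set.Ioo a b, 1 < t * h x) → StrictAntiOn (φ t) (Set.Icc a b) := by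
    intro t a b ha hb hcrit
    apply strictAntiOn_of_deriv_neg (convex_Icc a b) ((hcontφ t).mono (Set.Icc_subset_Icc ha hb))
    intro x hx
    rw [interior_Icc] at hx
    have hxm : x ∈ Set.Ioo (0:ℝ) 1 := ⟨lt_of_le_of_lt ha hx.1, lt_of_lt_of_le hx.2 hb⟩
    rw [(hφd t x hxm).deriv]
    have := hcrit x hx
    exact mul_neg_of_pos_of_neg (Real.exp_pos _) (by linarith)
  constructor
  · -- part 1
    intro t ht hts
    apply hmonocrit t 0 1 le_rfl le_rfl
    intro x hx
    rcases eq_or_lt_of_le ht with rfl | htpos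
    · simpa using zero_lt_one
    by_contra hcon
    push_neg at hcon
    have hxh : 1 / t ≤ h x := by
      rw [div_le_iff₀ htpos] at *; linarith [hcon]
    set y := (x + 1) / 2 with hy
    have hym : y ∈ Set.Ioo (0:ℝ) 1 := by constructor <;> [nlinarith [hx.1, hx.2]; nlinarith [hx.2]]
    have hxy : x < y := by simp only [hy]; linarith [hx.2]
    have h1 : 1 / t < h y := lt_of_le_of_lt hxh (hhmono x hx y hym hxy)
    have hhy0 : 0 < h y := lt_of_le_of_lt (by positivity) h1
    have h2 : ENNReal.ofReal (1 / t) < K :=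
      lt_of_lt_of_le ((ENNReal.ofReal_lt_ofReal_iff hhy0).2 h1) (hhK y hym)
    have h3 : K⁻¹ < ENNReal.ofReal t := by
      have := ENNReal.inv_lt_inv.mpr h2
      rwa [one_div, ENNReal.ofReal_inv_of_pos htpos, inv_inv] at this
    have h4 : (K⁻¹).toReal < t := by
      have := ENNReal.toReal_lt_toReal (by simp [ENNReal.inv_ne_top, hKpos.ne']) ENNReal.ofReal_ne_top |>.2 h3
      rwa [ENNReal.toReal_ofReal htpos.le] at this
    linarith
  · -- part 2
    intro t ht
    have htpos : 0 < t := lt_of_le_of_lt ENNReal.toReal_nonneg ht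
    have hKt : ENNReal.ofReal (1 / t) < K := by
      by_contra hcon
      push_neg at hcon
      have : ENNReal.ofReal t ≤ K⁻¹ := by
        have := ENNReal.inv_le_inv.mpr hcon
        rwa [one_div, ENNReal.ofReal_inv_of_pos htpos, inv_inv] at this
      have := ENNReal.toReal_mono (by simp [hKpos.ne']) this
      rw [ENNReal.toReal_ofReal htpos.le] at this
      linarith
    obtain ⟨x₂, hx₂, hx₂h⟩ := hhsup (1 / t) hKt
    -- find x₁ < x₂ with h x₁ < 1/t
    have hev : ∀ᶠ x in nhdsWithin 0 (Set.Ioi 0), h x < 1 / t :=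
      hh0.eventually_lt_const (by positivity)
    obtain ⟨x₁, hx₁mem, hx₁lt, hx₁h⟩ : ∃ x₁, x₁ ∈ Set.Ioo (0:ℝ) 1 ∧ x₁ < x₂ ∧ h x₁ < 1 / t := by
      have hmem : ∀ᶠ x in nhdsWithin 0 (Set.Ioi 0), x ∈ Set.Ioo (0:ℝ) x₂ :=
        eventually_of_mem (Ioo_mem_nhdsGT_of_mem ⟨le_rfl, hx₂.1⟩) (fun x hx => hx)
      obtain ⟨x₁, hx₁h, hx₁m⟩ := (hev.and hmem).exists
      exact ⟨x₁, ⟨hx₁m.1, lt_trans hx₁m.2 hx₂.2⟩, hx₁m.2, hx₁h⟩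
    -- IVT
    have hsub : Set.Icc x₁ x₂ ⊆ Set.Ioo (0:ℝ) 1 := fun z hz =>
      ⟨lt_of_lt_of_le hx₁mem.1 hz.1, lt_of_le_of_lt hz.2 hx₂.2⟩
    have hcont : ContinuousOn h (Set.Icc x₁ x₂) := fun z hz =>
      (hconth z (hsub hz)).continuousWithinAt
    obtain ⟨c, hc, hch⟩ : ∃ c ∈ Set.Icc x₁ x₂, h c = 1 / t := by
      have := intermediate_value_Icc hx₁lt.le hcont
      exact this ⟨hx₁h.le, hx₂h.le⟩
    have hcmem : c ∈ Set.Ioo (0:ℝ) 1 := hsub hc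
    have hgc : deriv g₀ c = h c / c := (hderiv c hcmem).deriv
    refine ⟨c, ⟨hcmem, ?_, ?_, ?_⟩, ?_⟩
    · rw [hgc, hch]
      have hc0 : c ≠ 0 := ne_of_gt hcmem.1
      field_simp
    · -- StrictMonoOn on [0,c]
      apply hmonocrit t 0 c le_rfl hcmem.2.le
      intro x hx
      have hxm : x ∈ Set.Ioo (0:ℝ) 1 := ⟨hx.1, lt_trans hx.2 hcmem.2⟩
      have := hhmono x hxm c hcmem hx.2
      rw [hch] at this
      calc t * h x < t * (1/t) := by exact mul_lt_mul_of_pos_left this htpos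
        _ = 1 := by field_simp
    · -- StrictAntiOn on [c,1]
      apply hanticrit t c 1 hcmem.1.le le_rfl
      intro x hx
      have hxm : x ∈ Set.Ioo (0:ℝ) 1 := ⟨lt_trans hcmem.1 hx.1, hx.2⟩
      have := hhmono c hcmem x hxm hx.1
      rw [hch] at this
      calc (1:ℝ) = t * (1/t) := by field_simp
        _ < t * h x := by exact mul_lt_mul_of_pos_left this htpos
    · -- uniqueness
      rintro m' ⟨hm'mem, hm'eq, -, -⟩
      have hgm' : deriv g₀ m' = h m' / m' := (hderiv m' hm'mem).deriv
      have hm'h : h m' = 1 / t := by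
        have hm0 : m' ≠ 0 := ne_of_gt hm'mem.1
        have e1 : t * m' * (h m' / m') = t * h m' := by field_simp
        rw [hgm', e1] at hm'eq
        rw [eq_div_iff htpos.ne']
        linarith
      rcases lt_trichotomy m' c with hlt | heq | hgt
      · have := hhmono m' hm'mem c hcmem hlt; rw [hch, hm'h] at this; linarith
      · exact heq
      · have := hhmono c hcmem m' hm'mem hgt; rw [hch, hm'h] at this; linarith
end

section
/- With the notation above (Flory case), the map t ↦ l_t (defined by l_t = e^{−t(M₀ − g₀(l_t))}, l_t ∈ [0,1) for t > 1/K) is differentiable and strictly decreasing on (1/K, ∞), with derivative dl_t/dt = −(M₀ − g₀(l_t)) l_t / (1 − t g₀'(l_t) l_t) < 0. -/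
open MeasureTheory Set Filter Topology

/-- log z + (1-z)/z > 0 on (0,1). -/
lemma aux_log_pos {z : ℝ} (hz0 : 0 < z) (hz1 : z < 1) :
    0 < Real.log z + (1 - z) / z := by
  have h := Real.log_lt_sub_one_of_pos (inv_pos.mpr hz0) (by
    intro h; rw [inv_eq_one] at h; linarith)
  rw [Real.log_inv] at h
  have hz : (1 - z) / z = z⁻¹ - 1 := by field_simp
  rw [hz]; linarith

/-- z·(-log z) < 1 - z on (0,1). -/
lemma aux_zlog {z : ℝ} (hz0 : 0 < z) (hz1 : z < 1) :
    z * (-Real.log z) < 1 - z := by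
  have h := aux_log_pos hz0 hz1
  have h2 : 0 < z * (Real.log z + (1 - z) / z) := mul_pos hz0 h
  have h3 : z * (Real.log z + (1 - z) / z) = z * Real.log z + (1 - z) := by
    field_simp
  nlinarith

/-- φ(z) = (1-z)/(-log z) is strictly monotone on (0,1). -/
lemma aux_phi_mono : StrictMonoOn (fun z : ℝ => (1 - z) / (-Real.log z)) (Ioo 0 1) := by
  have key : ∀ z ∈ Ioo (0:ℝ) 1, HasDerivAt (fun z : ℝ => (1 - z) / (-Real.log z))
      ((Real.log z + (1 - z) / z) / (Real.log z)^2) z := by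
    intro z hz
    obtain ⟨hz0, hz1⟩ := hz
    have hlog : Real.log z < 0 := Real.log_neg hz0 hz1
    have h1 : HasDerivAt (fun z : ℝ => 1 - z) (-1) z := by
      simpa using (hasDerivAt_id' z).const_sub (1:ℝ)
    have h2 : HasDerivAt (fun z : ℝ => -Real.log z) (-z⁻¹) z :=
      (Real.hasDerivAt_log hz0.ne').neg
    have h3 := h1.div h2 (by simpa using hlog.ne)
    refine HasDerivAt.congr_deriv h3 ?_
    have : (-Real.log z)^2 = (Real.log z)^2 := by ring
    rw [this]
    field_simp
    ring
  apply strictMonoOn_of_deriv_pos (convex_Ioo 0 1)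
  · intro z hz
    exact ((key z hz).continuousAt).continuousWithinAt
  · rw [interior_Ioo]
    intro z hz
    rw [(key z hz).deriv]
    obtain ⟨hz0, hz1⟩ := hz
    have hlog : Real.log z < 0 := Real.log_neg hz0 hz1
    exact div_pos (aux_log_pos hz0 hz1) (by nlinarith)

/-- Cross inequality: (1-a)(-log b) < (1-b)(-log a) for 0<a<b<1. -/
lemma aux_cross {a b : ℝ} (ha : 0 < a) (hab : a < b) (hb : b < 1) :
    (1 - a) * (-Real.log b) < (1 - b) * (-Real.log a) := by
  have hla : 0 < -Real.log a := by have := Real.log_neg ha (hab.trans hb); linarith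
  have hlb : 0 < -Real.log b := by have := Real.log_neg (ha.trans hab) hb; linarith
  have := aux_phi_mono ⟨ha, hab.trans hb⟩ ⟨ha.trans hab, hb⟩ hab
  simp only at this
  rw [div_lt_div_iff₀ hla hlb] at this
  linarith

/-- boundedness of m² r^m. -/
lemma aux_bound {r : ℝ} (hr0 : 0 < r) (hr1 : r < 1) {m : ℝ} (hm : 0 < m) :
    m^2 * r^m ≤ max 1 (27 / (-Real.log r)^3) := by
  set c := -Real.log r with hc
  have hrc : Real.log r = -c := by rw [hc]; ring
  clear_value c
  have hcpos : 0 < c := by have := Real.log_neg hr0 hr1; rw [hc]; linarith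
  have hrm : r ^ m = Real.exp (-(c*m)) := by
    rw [Real.rpow_def_of_pos hr0, hrc]; ring_nf
  rcases le_or_gt m 1 with hm1 | hm1
  · refine le_trans ?_ (le_max_left _ _)
    have h1 : r ^ m ≤ 1 := (Real.rpow_le_one hr0.le hr1.le hm.le)
    nlinarith [Real.rpow_pos_of_pos hr0 m]
  · refine le_trans ?_ (le_max_right _ _)
    have hz : 0 < c * m := mul_pos hcpos (by linarith)
    have h1 : (c*m/3)^3 ≤ Real.exp (c*m) := by
      have h2 : c*m/3 ≤ Real.exp (c*m/3) := by
        have := Real.add_one_le_exp (c*m/3); linarith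
      calc (c*m/3)^3 ≤ (Real.exp (c*m/3))^3 := by
              apply pow_le_pow_left₀ (by positivity) h2
        _ = Real.exp (c*m) := by
              rw [← Real.exp_nat_mul]; norm_num; ring_nf
  -- r^m = exp(-(cm)) ≤ 27/(cm)^3
    have hexp : Real.exp (-(c*m)) ≤ 27 / (c*m)^3 := by
      rw [Real.exp_neg, inv_eq_one_div, div_le_div_iff₀ (Real.exp_pos _) (by positivity)]
      have h5 : 27*(c*m/3)^3 = (c*m)^3 := by ring
      nlinarith [h1]
    rw [hrm]
    calc m^2 * Real.exp (-(c*m)) ≤ m^2 * (27/(c*m)^3) := by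
          apply mul_le_mul_of_nonneg_left hexp (by positivity)
      _ = 27 / (c^3 * m) := by field_simp
      _ ≤ 27 / c^3 := by
          apply div_le_div_of_nonneg_left (by norm_num) (by positivity)
          nlinarith [pow_pos hcpos 3]

open MeasureTheory Set Filter Topology ENNReal

/-- The map `t ↦ l_t` (Flory case) is differentiable and strictly
decreasing on `(1/K,∞)`, with `dl_t/dt = -(M₀ - g₀(l_t)) l_t / (1 - t g₀'(l_t) l_t) < 0`. -/
theorem stmt_7 (μ₀ : Measure ℝ) [IsFiniteMeasure μ₀] (hμ₀ : μ₀ ≠ 0)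
    (hsupp : μ₀ (Set.Iic (0:ℝ)) = 0)
    (M₀ : ℝ) (hM₀pos : 0 < M₀)
    (hintm : Integrable (fun m : ℝ => m) μ₀)
    (hM₀ : ∫ m, m ∂μ₀ = M₀)
    (K : ℝ≥0∞) (hKpos : 0 < K)
    (hK : ∫⁻ m, ENNReal.ofReal (m ^ 2) ∂μ₀ = K)
    (g₀ : ℝ → ℝ)
    (hg₀ : ∀ x ∈ Set.Icc (0:ℝ) 1, g₀ x = ∫ m, m * x ^ m ∂μ₀)
    (l : ℝ → ℝ)
    (hl : ∀ t > (K⁻¹).toReal, l t ∈ Set.Ico (0:ℝ) 1 ∧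
      l t = Real.exp (-(t * (M₀ - g₀ (l t))))) :
    StrictAntiOn l (Set.Ioi (K⁻¹).toReal) ∧
    ∀ t > (K⁻¹).toReal,
      HasDerivAt l (-(M₀ - g₀ (l t)) * l t / (1 - t * deriv g₀ (l t) * l t)) t ∧
      -(M₀ - g₀ (l t)) * l t / (1 - t * deriv g₀ (l t) * l t) < 0 := by
  set c := (K⁻¹).toReal with hcdef
  -- a.e. m > 0
  have haeIoi : ∀ᵐ m ∂μ₀, m ∈ Ioi (0:ℝ) := by
    rw [ae_iff]
    convert hsupp using 2
    ext m; simp [not_lt]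
  have hμIoi : 0 < μ₀ (Ioi 0) := by
    have h1 : μ₀ (Ioi (0:ℝ)) = μ₀ univ := by
      rw [← compl_Iic, measure_compl measurableSet_Iic (measure_ne_top μ₀ _), hsupp,
        tsub_zero]
    rw [h1]; exact Measure.measure_univ_pos.mpr hμ₀
  -- positivity of integrals of positive functions
  have key : ∀ f : ℝ → ℝ, Integrable f μ₀ → (∀ m ∈ Ioi (0:ℝ), 0 < f m) →
      0 < ∫ m, f m ∂μ₀ := by
    intro f hf hpos
    rw [integral_pos_iff_support_of_nonneg_ae
      (by filter_upwards [haeIoi] with m hm using (hpos m hm).le) hf]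
    exact lt_of_lt_of_le hμIoi
      (measure_mono fun m hm => Function.mem_support.mpr (hpos m hm).ne')
  -- continuity of m ↦ x ^ m
  have hcont : ∀ x : ℝ, 0 < x → Continuous (fun m : ℝ => x ^ m) := by
    intro x hx
    have h : (fun m : ℝ => x ^ m) = fun m => Real.exp (Real.log x * m) := by
      funext m; rw [Real.rpow_def_of_pos hx]
    rw [h]; exact Real.continuous_exp.comp (continuous_const.mul continuous_id)
  -- integrability of m ↦ m x^m
  have hint1 : ∀ x ∈ Ioo (0:ℝ) 1, Integrable (fun m : ℝ => m * x ^ m) μ₀ := by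
    intro x hx
    refine hintm.mono ((continuous_id.mul (hcont x hx.1)).aestronglyMeasurable) ?_
    filter_upwards [haeIoi] with m hm
    have h1 : 0 < x ^ m := Real.rpow_pos_of_pos hx.1 m
    have h2 : x ^ m ≤ 1 := Real.rpow_le_one hx.1.le hx.2.le hm.le
    calc ‖m * x ^ m‖ = |m| * x ^ m := by
          rw [norm_mul, Real.norm_eq_abs, Real.norm_eq_abs, abs_of_pos h1]
      _ ≤ ‖m‖ := by rw [Real.norm_eq_abs]; nlinarith [abs_nonneg m]
  -- A(x) = M₀ - g₀ x as integral, and positivity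
  have hAeq : ∀ x ∈ Ioo (0:ℝ) 1, M₀ - g₀ x = ∫ m, (m - m * x ^ m) ∂μ₀ := by
    intro x hx
    rw [hg₀ x ⟨hx.1.le, hx.2.le⟩, ← hM₀, ← integral_sub hintm (hint1 x hx)]
  have hApos : ∀ x ∈ Ioo (0:ℝ) 1, 0 < M₀ - g₀ x := by
    intro x hx
    rw [hAeq x hx]
    apply key _ (hintm.sub (hint1 x hx))
    intro m hm
    simp only [Pi.sub_apply]
    have h1 := Real.rpow_lt_one hx.1.le hx.2 hm
    have hm' : (0:ℝ) < m := hm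
    nlinarith [mul_pos hm' (show (0:ℝ) < 1 - x ^ m by linarith)]
  -- the function T
  set T : ℝ → ℝ := fun x => -Real.log x / (M₀ - g₀ x) with hTdef
  -- fixed point
  have hfix : ∀ s, c < s → l s ∈ Ioo (0:ℝ) 1 ∧
      Real.log (l s) = -(s * (M₀ - g₀ (l s))) := by
    intro s hs
    obtain ⟨hmem, heq⟩ := hl s hs
    have hpos : 0 < l s := by rw [heq]; exact Real.exp_pos _
    refine ⟨⟨hpos, hmem.2⟩, ?_⟩
    conv_lhs => rw [heq]
    rw [Real.log_exp]
  have hTfix : ∀ s, c < s → T (l s) = s := by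
    intro s hs
    obtain ⟨hmem, hlog⟩ := hfix s hs
    have hA := hApos _ hmem
    show -Real.log (l s) / (M₀ - g₀ (l s)) = s
    rw [hlog]; field_simp
  -- strict antitonicity of T
  have hTanti : StrictAntiOn T (Ioo (0:ℝ) 1) := by
    intro x hx y hy hxy
    have hAx := hApos x hx; have hAy := hApos y hy
    show -Real.log y / (M₀ - g₀ y) < -Real.log x / (M₀ - g₀ x)
    rw [div_lt_div_iff₀ hAy hAx]
    have h1 : -Real.log y * (M₀ - g₀ x) = ∫ m, (-Real.log y) * (m - m * x ^ m) ∂μ₀ := by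
      rw [integral_const_mul, ← hAeq x hx]
    have h2 : -Real.log x * (M₀ - g₀ y) = ∫ m, (-Real.log x) * (m - m * y ^ m) ∂μ₀ := by
      rw [integral_const_mul, ← hAeq y hy]
    rw [h1, h2]
    have hintx : Integrable (fun m : ℝ => -Real.log y * (m - m * x ^ m)) μ₀ := by
      have := (hintm.sub (hint1 x hx)).const_mul (-Real.log y)
      simpa using this
    have hinty : Integrable (fun m : ℝ => -Real.log x * (m - m * y ^ m)) μ₀ := by
      have := (hintm.sub (hint1 y hy)).const_mul (-Real.log x)
      simpa using this
    have h3 : 0 < ∫ m, ((-Real.log x) * (m - m * y ^ m)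
        - (-Real.log y) * (m - m * x ^ m)) ∂μ₀ := by
      apply key _ (hinty.sub hintx)
      intro m hm
      simp only [Pi.sub_apply]
      have hxm : 0 < x ^ m := Real.rpow_pos_of_pos hx.1 m
      have hab : x ^ m < y ^ m := Real.rpow_lt_rpow hx.1.le hxy hm
      have hb1 : y ^ m < 1 := Real.rpow_lt_one hy.1.le hy.2 hm
      have hcross := aux_cross hxm hab hb1
      rw [Real.log_rpow hx.1, Real.log_rpow hy.1] at hcross
      have hm' : (0:ℝ) < m := hm
      nlinarith [hcross]
    rw [integral_sub hinty hintx] at h3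
    linarith
  constructor
  · -- strict antitonicity of l
    intro a ha b hb hab
    have hTa := hTfix a ha; have hTb := hTfix b hb
    have hma := (hfix a ha).1; have hmb := (hfix b hb).1
    by_contra h; push_neg at h
    rcases eq_or_lt_of_le h with he | hlt
    · rw [← hTa, ← hTb, he] at hab; exact lt_irrefl _ hab
    · have := hTanti hma hmb hlt
      rw [hTa, hTb] at this
      exact absurd hab (not_lt.mpr this.le)
  · -- derivative
    intro t ht
    obtain ⟨hx₀mem, hlog⟩ := hfix t ht
    set x₀ := l t with hx₀def
    have hA := hApos x₀ hx₀mem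
    -- derivative of g₀ at x₀
    have hg₀deriv : Integrable (fun m : ℝ => m * (m * x₀ ^ (m - 1))) μ₀ ∧
        HasDerivAt g₀ (∫ m, m * (m * x₀ ^ (m - 1)) ∂μ₀) x₀ := by
      obtain ⟨hx₀0, hx₀1⟩ := hx₀mem
      set δ : ℝ := x₀ / 2 with hδdef
      set r : ℝ := (1 + x₀) / 2 with hrdef
      have hδ0 : 0 < δ := by rw [hδdef]; linarith
      have hr0 : 0 < r := by rw [hrdef]; linarith
      have hr1 : r < 1 := by rw [hrdef]; linarith
      set ε : ℝ := min (x₀ / 2) ((1 - x₀) / 2) with hεdef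
      have hε0 : 0 < ε := lt_min (by linarith) (by linarith)
      have hball : Metric.ball x₀ ε ⊆ Ioo δ r := by
        intro x hx
        rw [Metric.mem_ball, Real.dist_eq] at hx
        have h1 := abs_lt.mp hx
        have h2 : ε ≤ x₀ / 2 := min_le_left _ _
        have h3 : ε ≤ (1 - x₀) / 2 := min_le_right _ _
        exact ⟨by rw [hδdef]; linarith, by rw [hrdef]; linarith⟩
      have hball01 : Metric.ball x₀ ε ⊆ Ioo 0 1 := fun x hx =>
        ⟨hδ0.trans (hball hx).1, (hball hx).2.trans hr1⟩
      set C : ℝ := max 1 (27 / (-Real.log r) ^ 3) / δ with hCdef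
      have main := hasDerivAt_integral_of_dominated_loc_of_deriv_le
        (F := fun (x : ℝ) (m : ℝ) => m * x ^ m)
        (F' := fun (x : ℝ) (m : ℝ) => m * (m * x ^ (m - 1)))
        (x₀ := x₀) (bound := fun _ => C) (μ := μ₀) (Metric.ball_mem_nhds x₀ hε0)
        ?_ (hint1 x₀ ⟨hx₀0, hx₀1⟩) ?_ ?_ (integrable_const C) ?_
      · refine ⟨main.1, main.2.congr_of_eventuallyEq ?_⟩
        filter_upwards [Ioo_mem_nhds hx₀0 hx₀1] with x hx
        exact hg₀ x ⟨hx.1.le, hx.2.le⟩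
      · -- measurability of F x near x₀
        filter_upwards [Metric.ball_mem_nhds x₀ hε0] with x hx
        exact (continuous_id.mul (hcont x (hball01 hx).1)).aestronglyMeasurable
      · -- measurability of F' x₀
        have hc1 : Continuous (fun m : ℝ => x₀ ^ (m - 1)) :=
          (hcont x₀ hx₀0).comp (continuous_id.sub continuous_const)
        exact (continuous_id.mul (continuous_id.mul hc1)).aestronglyMeasurable
      · -- bound
        filter_upwards [haeIoi] with m hm
        intro x hx
        obtain ⟨hxδ, hxr⟩ := hball hx
        have hx0 : 0 < x := hδ0.trans hxδ
        have hm' : (0:ℝ) < m := hm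
        have hp : 0 < x ^ (m - 1) := Real.rpow_pos_of_pos hx0 _
        have h2 : x ^ (m - 1) = x ^ m / x := by
          rw [Real.rpow_sub hx0, Real.rpow_one]
        have hxm : x ^ m ≤ r ^ m := (Real.rpow_lt_rpow hx0.le hxr hm').le
        have hb := aux_bound hr0 hr1 hm'
        calc ‖m * (m * x ^ (m - 1))‖ = m ^ 2 * x ^ (m - 1) := by
              rw [Real.norm_eq_abs, abs_of_nonneg (by positivity)]; ring
          _ = m ^ 2 * (x ^ m / x) := by rw [h2]
          _ ≤ m ^ 2 * (r ^ m / δ) := by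
              apply mul_le_mul_of_nonneg_left _ (sq_nonneg m)
              exact div_le_div₀ (Real.rpow_pos_of_pos hr0 m).le hxm hδ0 hxδ.le
          _ = m ^ 2 * r ^ m / δ := by ring
          _ ≤ C := by rw [hCdef]; gcongr
      · -- differentiability
        filter_upwards [haeIoi] with m hm
        intro x hx
        have hx0 : 0 < x := (hball01 hx).1
        exact (Real.hasDerivAt_rpow_const (Or.inl hx0.ne')).const_mul m
    obtain ⟨hDint, hgD⟩ := hg₀deriv
    set D := ∫ m, m * (m * x₀ ^ (m - 1)) ∂μ₀ with hDdef
    have ht0 : 0 < t := by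
      have hlogneg : Real.log x₀ < 0 := Real.log_neg hx₀mem.1 hx₀mem.2
      nlinarith [hlog, hA]
    -- key inequality t * D * x₀ < 1
    have hkey3 : t * D * x₀ < 1 := by
      obtain ⟨hx₀0, hx₀1⟩ := hx₀mem
      have h1 : (-Real.log x₀) * x₀ * D < M₀ - g₀ x₀ := by
        have h2 : (-Real.log x₀) * x₀ * D
            = ∫ m, (-Real.log x₀ * x₀) * (m * (m * x₀ ^ (m - 1))) ∂μ₀ := by
          rw [integral_const_mul, ← hDdef]
        rw [hAeq x₀ ⟨hx₀0, hx₀1⟩, h2]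
        have hintc : Integrable
            (fun m : ℝ => (-Real.log x₀ * x₀) * (m * (m * x₀ ^ (m - 1)))) μ₀ := by
          have := hDint.const_mul (-Real.log x₀ * x₀)
          simpa using this
        have hintms : Integrable (fun m : ℝ => m - m * x₀ ^ m) μ₀ := by
          have := hintm.sub (hint1 x₀ ⟨hx₀0, hx₀1⟩)
          exact this
        have h3 : 0 < ∫ m, ((m - m * x₀ ^ m)
            - (-Real.log x₀ * x₀) * (m * (m * x₀ ^ (m - 1)))) ∂μ₀ := by
          apply key _ (hintms.sub hintc)
          intro m hm
          simp only [Pi.sub_apply]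
          have hm' : (0:ℝ) < m := hm
          have hz := aux_zlog (Real.rpow_pos_of_pos hx₀0 m)
            (Real.rpow_lt_one hx₀0.le hx₀1 hm')
          rw [Real.log_rpow hx₀0] at hz
          have hz2 : m * (x₀ ^ m * -(m * Real.log x₀)) < m * (1 - x₀ ^ m) :=
            mul_lt_mul_of_pos_left hz hm'
          have hsub : x₀ ^ (m - 1) * x₀ = x₀ ^ m := by
            rw [Real.rpow_sub hx₀0, Real.rpow_one, div_mul_cancel₀ _ hx₀0.ne']
          have e1 : (-Real.log x₀ * x₀) * (m * (m * x₀ ^ (m - 1)))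
              = m * ((x₀ ^ (m - 1) * x₀) * -(m * Real.log x₀)) := by ring
          rw [hsub] at e1
          nlinarith [hz2, e1]
        rw [integral_sub hintms hintc] at h3
        linarith
      have hlog' : -Real.log x₀ = t * (M₀ - g₀ x₀) := by linarith [hlog]
      rw [hlog'] at h1
      have h4 : (M₀ - g₀ x₀) * (t * D * x₀) < (M₀ - g₀ x₀) * 1 := by nlinarith [h1]
      exact lt_of_mul_lt_mul_left h4 hA.le
    -- derivative of T at x₀
    have hTd : HasDerivAt T ((-x₀⁻¹ * (M₀ - g₀ x₀) - (-Real.log x₀) * (0 - D))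
        / (M₀ - g₀ x₀) ^ 2) x₀ := by
      exact ((Real.hasDerivAt_log hx₀mem.1.ne').neg).div
        ((hasDerivAt_const x₀ M₀).sub hgD) hA.ne'
    set T' := (-x₀⁻¹ * (M₀ - g₀ x₀) - (-Real.log x₀) * (0 - D)) / (M₀ - g₀ x₀) ^ 2
      with hT'def
    have hT'eq : T' = (t * D * x₀ - 1) / (x₀ * (M₀ - g₀ x₀)) := by
      rw [hT'def]
      have hlog' : Real.log x₀ = -(t * (M₀ - g₀ x₀)) := hlog
      rw [hlog', div_eq_div_iff (pow_pos hA 2).ne' (mul_pos hx₀mem.1 hA).ne']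
      field_simp [hx₀mem.1.ne']
      ring
    have hT'neg : T' < 0 := by
      rw [hT'eq]
      apply div_neg_of_neg_of_pos (by linarith) (mul_pos hx₀mem.1 hA)
    -- continuity of l at t
    have hlcont : ContinuousAt l t := by
      obtain ⟨hx₀0, hx₀1⟩ := hx₀mem
      rw [Metric.continuousAt_iff]
      intro ε hε
      set ε' : ℝ := min (ε / 2) (min (x₀ / 2) ((1 - x₀) / 2)) with hε'def
      have hε'1 : ε' ≤ ε / 2 := min_le_left _ _
      have hε'2 : ε' ≤ x₀ / 2 := le_trans (min_le_right _ _) (min_le_left _ _)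
      have hε'3 : ε' ≤ (1 - x₀) / 2 := le_trans (min_le_right _ _) (min_le_right _ _)
      have hε'0 : 0 < ε' := lt_min (by linarith) (lt_min (by linarith) (by linarith))
      have hmem1 : x₀ - ε' ∈ Ioo (0:ℝ) 1 := ⟨by linarith, by linarith⟩
      have hmem2 : x₀ + ε' ∈ Ioo (0:ℝ) 1 := ⟨by linarith, by linarith⟩
      have hp : t < T (x₀ - ε') := by
        have h := hTanti hmem1 ⟨hx₀0, hx₀1⟩ (by linarith)
        rw [hTfix t ht] at h
        exact h
      have hq : T (x₀ + ε') < t := by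
        have h := hTanti ⟨hx₀0, hx₀1⟩ hmem2 (by linarith)
        rw [hTfix t ht] at h
        exact h
      refine ⟨min (T (x₀ - ε') - t) (min (t - T (x₀ + ε')) (t - c)),
        lt_min (by linarith) (lt_min (by linarith) (by linarith)), ?_⟩
      intro s hs
      rw [Real.dist_eq] at hs
      have habs := abs_lt.mp hs
      have hd1 : min (T (x₀ - ε') - t) (min (t - T (x₀ + ε')) (t - c))
          ≤ T (x₀ - ε') - t := min_le_left _ _
      have hd2 : min (T (x₀ - ε') - t) (min (t - T (x₀ + ε')) (t - c))
          ≤ t - T (x₀ + ε') := le_trans (min_le_right _ _) (min_le_left _ _)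
      have hd3 : min (T (x₀ - ε') - t) (min (t - T (x₀ + ε')) (t - c))
          ≤ t - c := le_trans (min_le_right _ _) (min_le_right _ _)
      have hsc : c < s := by linarith
      have hTs := hTfix s hsc
      have hsmem := (hfix s hsc).1
      have hlt1 : x₀ - ε' < l s := by
        by_contra h
        push_neg at h
        have h5 : T (x₀ - ε') ≤ T (l s) := by
          rcases eq_or_lt_of_le h with he | hlt
          · rw [he]
          · exact (hTanti hsmem hmem1 hlt).le
        rw [hTs] at h5
        linarith
      have hlt2 : l s < x₀ + ε' := by
        by_contra h
        push_neg at h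
        have h5 : T (l s) ≤ T (x₀ + ε') := by
          rcases eq_or_lt_of_le h with he | hlt
          · rw [he]
          · exact (hTanti hmem2 hsmem hlt).le
        rw [hTs] at h5
        linarith
      rw [Real.dist_eq, abs_lt]
      constructor <;> [skip; skip] <;>
        simp only [show l t = x₀ from rfl] <;> linarith
    have hev : ∀ᶠ s in 𝓝 t, T (l s) = s := by
      filter_upwards [Ioi_mem_nhds ht] with s hs using hTfix s hs
    have hld : HasDerivAt l T'⁻¹ t :=
      HasDerivAt.of_local_left_inverse hlcont hTd hT'neg.ne hev
    have hderiv_g : deriv g₀ x₀ = D := hgD.deriv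
    have hval : T'⁻¹ = -(M₀ - g₀ x₀) * x₀ / (1 - t * D * x₀) := by
      rw [hT'eq, inv_div]
      rw [div_eq_div_iff (by linarith) (by linarith)]
      ring
    constructor
    · rw [hderiv_g]
      rw [← hval]; exact hld
    · rw [hderiv_g]
      apply div_neg_of_neg_of_pos (by nlinarith [hx₀mem.1]) (by linarith)
end

section
/- With k₀ as above, if k₀(1⁻) = A₀ < ∞ and k₀'(1⁻) = K < ∞ with K > 0, then lim_{x→1⁻} G(x) = 1 − A₀/K; if k₀(1⁻) = +∞, then lim_{x→1⁻} k₀(x)/k₀'(x) = 0 and hence lim_{x→1⁻} G(x) = 1. -/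
open Set Filter Topology

lemma stmt11_convex (c : ℕ → ℝ) (hc : ∀ a, 0 ≤ c a) (k₀ : ℝ → ℝ)
    (hrep : ∀ x ∈ Set.Ico (0:ℝ) 1, HasSum (fun a : ℕ => c a * x ^ a) (k₀ x)) :
    ConvexOn ℝ (Set.Ico (0:ℝ) 1) k₀ := by
  refine ⟨convex_Ico 0 1, fun x hx y hy a b ha hb hab => ?_⟩
  have hmem : a • x + b • y ∈ Set.Ico (0:ℝ) 1 := (convex_Ico 0 1) hx hy ha hb hab
  have h1 := hrep _ hmem
  have h2 : HasSum (fun n : ℕ => a * (c n * x ^ n) + b * (c n * y ^ n))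
      (a * k₀ x + b * k₀ y) := ((hrep x hx).mul_left a).add ((hrep y hy).mul_left b)
  have hle : ∀ n : ℕ, c n * (a • x + b • y) ^ n ≤ a * (c n * x ^ n) + b * (c n * y ^ n) := by
    intro n
    have hpow := (convexOn_pow (𝕜 := ℝ) n).2 hx.1 hy.1 ha hb hab
    simp only [smul_eq_mul] at hpow ⊢
    nlinarith [hc n, mul_le_mul_of_nonneg_left hpow (hc n)]
  simpa [smul_eq_mul] using hasSum_le hle h1 h2

/-- With `G(x) = x - k₀(x)/k₀'(x)`: if `k₀(1⁻) = A₀ < ∞` and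
`k₀'(1⁻) = K ∈ (0,∞)`, then `G(x) → 1 - A₀/K` as `x → 1⁻`; if `k₀(1⁻) = +∞`,
then `k₀(x)/k₀'(x) → 0` and `G(x) → 1` as `x → 1⁻`. -/
theorem stmt_11 (c : ℕ → ℝ) (hc : ∀ a, 0 ≤ c a)
    (k₀ : ℝ → ℝ)
    (hrep : ∀ x ∈ Set.Ico (0:ℝ) 1, HasSum (fun a : ℕ => c a * x ^ a) (k₀ x))
    (hpos : ∀ x ∈ Set.Ioo (0:ℝ) 1, 0 < k₀ x)
    (hd1 : ∀ x ∈ Set.Ioo (0:ℝ) 1, HasDerivAt k₀ (deriv k₀ x) x)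
    (hd1pos : ∀ x ∈ Set.Ioo (0:ℝ) 1, 0 < deriv k₀ x)
    (G : ℝ → ℝ) (hG : ∀ x, G x = x - k₀ x / deriv k₀ x) :
    (∀ A₀ K : ℝ, 0 < K →
      Tendsto k₀ (𝓝[<] (1:ℝ)) (𝓝 A₀) →
      Tendsto (deriv k₀) (𝓝[<] (1:ℝ)) (𝓝 K) →
      Tendsto G (𝓝[<] (1:ℝ)) (𝓝 (1 - A₀ / K))) ∧
    (Tendsto k₀ (𝓝[<] (1:ℝ)) atTop →
      Tendsto (fun x => k₀ x / deriv k₀ x) (𝓝[<] (1:ℝ)) (𝓝 0) ∧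
      Tendsto G (𝓝[<] (1:ℝ)) (𝓝 1)) := by
  have hx1 : Tendsto (fun x : ℝ => x) (𝓝[<] (1:ℝ)) (𝓝 1) :=
    tendsto_id.mono_left nhdsWithin_le_nhds
  constructor
  · intro A₀ K hK hA hKlim
    have hdiv : Tendsto (fun x => k₀ x / deriv k₀ x) (𝓝[<] (1:ℝ)) (𝓝 (A₀ / K)) :=
      hA.div hKlim hK.ne'
    have := hx1.sub hdiv
    refine this.congr fun x => (hG x).symm
  · intro htop
    have hconv := stmt11_convex c hc k₀ hrep
    have hratio : Tendsto (fun x => k₀ x / deriv k₀ x) (𝓝[<] (1:ℝ)) (𝓝 0) := by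
      rw [NormedAddCommGroup.tendsto_nhds_zero]
      intro ε hε
      -- choose y close to 1
      obtain ⟨y, hy0, hy1, hyε⟩ : ∃ y : ℝ, 0 < y ∧ y < 1 ∧ 1 - y < ε / 4 := by
        refine ⟨max (1/2) (1 - ε/8), by positivity, ?_, ?_⟩
        · apply max_lt (by norm_num); linarith
        · have : (1:ℝ) - ε/8 ≤ max (1/2) (1 - ε/8) := le_max_right _ _
          linarith
      have hky : 0 < k₀ y := hpos y ⟨hy0, hy1⟩
      have hev1 : ∀ᶠ x in 𝓝[<] (1:ℝ), x ∈ Set.Ioo y 1 :=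
        Ioo_mem_nhdsLT_of_mem ⟨hy1, le_refl 1⟩
      have hev2 : ∀ᶠ x in 𝓝[<] (1:ℝ), 2 * k₀ y ≤ k₀ x := htop.eventually_ge_atTop _
      filter_upwards [hev1, hev2] with x hx hkx
      have hx01 : x ∈ Set.Ioo (0:ℝ) 1 := ⟨lt_trans hy0 hx.1, hx.2⟩
      have hkxpos : 0 < k₀ x := hpos x hx01
      have hd : 0 < deriv k₀ x := hd1pos x hx01
      -- slope bound from convexity
      have hslope : slope k₀ y x ≤ deriv k₀ x :=
        hconv.slope_le_of_hasDerivAt ⟨le_of_lt hy0, hy1⟩ ⟨le_of_lt hx01.1, hx01.2⟩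
          hx.1 (hd1 x hx01)
      rw [slope_def_field] at hslope
      have hxy : 0 < x - y := sub_pos.mpr hx.1
      have hxy' : x - y ≤ 1 - y := by linarith [hx.2.le]
      have hnum : k₀ x / 2 ≤ k₀ x - k₀ y := by linarith
      have hlb : k₀ x / 2 / (1 - y) ≤ (k₀ x - k₀ y) / (x - y) := by
        apply div_le_div₀ (by linarith) hnum hxy hxy'
      have hlb' : k₀ x / 2 / (1 - y) ≤ deriv k₀ x := le_trans hlb hslope
      have hpos' : 0 < k₀ x / 2 / (1 - y) := by
        apply div_pos (by linarith); linarith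
      have hkey : k₀ x / deriv k₀ x ≤ 2 * (1 - y) := by
        rw [div_le_iff₀ hd]
        have h2 := (div_le_iff₀ (by linarith : (0:ℝ) < 1 - y)).mp hlb'
        nlinarith
      have h0 : 0 ≤ k₀ x / deriv k₀ x := le_of_lt (div_pos hkxpos hd)
      rw [Real.norm_eq_abs, abs_of_nonneg h0]
      linarith
    refine ⟨hratio, ?_⟩
    have := hx1.sub hratio
    rw [sub_zero] at this
    refine this.congr fun x => (hG x).symm
end

section
/- Let ν be a finite measure on ℕ with ν(0) > 0 and generating function k(x) = Σ_{a≥0} ν(a) x^a, and let p_ν ∈ (0,1] be the smallest root of k(x) = x (assumed to exist, e.g. when k(1) ≤ 1 or by convexity when k(1)=1). Let c ∈ (0,1] satisfy c k'(c) = k(c) with k'(c) = k(c)/c. If k'(1) > 1 = k(1) (supercritical case with k(1)=1), then p_ν < c, i.e. the smallest fixed point of k is strictly below the tangency point c. -/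
open Set Filter Topology

/-- For a probability measure `ν` on ℕ with `ν(0) > 0`, some
`ν(a) > 0` with `a ≥ 2`, generating function `k` with `k(1) = 1` and
`k'(1) > 1`, the smallest root `p` of `k(x) = x` in `[0,1]` is strictly
smaller than the tangency point `c` solving `c k'(c) = k(c)`. -/
theorem stmt_13 (ν : ℕ → ℝ) (hν : ∀ a, 0 ≤ ν a) (hν0 : 0 < ν 0)
    (hν2 : ∃ a ≥ 2, 0 < ν a) (hs : HasSum ν 1)
    (k k' : ℝ → ℝ)
    (hk : ∀ x ∈ Set.Icc (0:ℝ) 1, HasSum (fun a : ℕ => ν a * x ^ a) (k x))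
    (hk' : ∀ x ∈ Set.Icc (0:ℝ) 1, HasDerivWithinAt k (k' x) (Set.Icc (0:ℝ) 1) x)
    (hsup : 1 < k' 1)
    (p : ℝ) (hp : p ∈ Set.Icc (0:ℝ) 1) (hproot : k p = p)
    (hpmin : ∀ x ∈ Set.Icc (0:ℝ) 1, k x = x → p ≤ x)
    (c : ℝ) (hc : c ∈ Set.Ioc (0:ℝ) 1) (hctan : c * k' c = k c) :
    p < c := by
  have h1mem : (1:ℝ) ∈ Set.Icc (0:ℝ) 1 := ⟨zero_le_one, le_rfl⟩
  have h0mem : (0:ℝ) ∈ Set.Icc (0:ℝ) 1 := ⟨le_rfl, zero_le_one⟩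
  -- k 1 = 1
  have hk1 : k 1 = 1 := by
    have h := hk 1 h1mem
    have h' : HasSum (fun a : ℕ => ν a * (1:ℝ) ^ a) 1 := by
      simpa using hs
    exact h.unique h'
  -- k 0 = ν 0
  have hk0 : k 0 = ν 0 := by
    have h := hk 0 h0mem
    have h' : HasSum (fun a : ℕ => ν a * (0:ℝ) ^ a) (ν 0) := by
      have : (fun a : ℕ => ν a * (0:ℝ) ^ a) = fun a : ℕ => if a = 0 then ν 0 else 0 := by
        funext a
        cases a with
        | zero => simp
        | succ n => simp
      rw [this]
      exact hasSum_ite_eq 0 (ν 0)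
    exact h.unique h'
  -- convexity of k on [0,1]
  have hconv : ConvexOn ℝ (Set.Icc (0:ℝ) 1) k := by
    refine ⟨convex_Icc 0 1, ?_⟩
    intro x hx y hy a b ha hb hab
    have hmem : a • x + b • y ∈ Set.Icc (0:ℝ) 1 := (convex_Icc (0:ℝ) 1) hx hy ha hb hab
    have h1 := hk _ hmem
    have h2 : HasSum (fun i : ℕ => a * (ν i * x ^ i) + b * (ν i * y ^ i))
        (a * k x + b * k y) := ((hk x hx).mul_left a).add ((hk y hy).mul_left b)
    have hle : ∀ i : ℕ, ν i * (a • x + b • y) ^ i ≤ a * (ν i * x ^ i) + b * (ν i * y ^ i) := by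
      intro i
      have hpow := (convexOn_pow i).2 (Set.mem_Ici.mpr hx.1) (Set.mem_Ici.mpr hy.1) ha hb hab
      simp only [smul_eq_mul] at hpow ⊢
      nlinarith [hν i, mul_le_mul_of_nonneg_left hpow (hν i)]
    simpa [smul_eq_mul] using hasSum_le hle h1 h2
  have hcontk : ContinuousOn k (Set.Icc (0:ℝ) 1) :=
    fun x hx => (hk' x hx).continuousWithinAt
  by_contra hpc
  push_neg at hpc  -- c ≤ p
  -- case c = 1
  rcases eq_or_lt_of_le hc.2 with hc1 | hc1
  · have hp1 : p = 1 := le_antisymm hp.2 (hc1 ▸ hpc)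
    rw [hc1, one_mul, hk1] at hctan
    exact absurd hctan (by linarith)
  -- now c < 1; find x0 ∈ (c,1) with k x0 < x0
  have hd1 := hk' 1 h1mem
  rw [hasDerivWithinAt_iff_tendsto_slope] at hd1
  have hsub : Set.Ioo c 1 ⊆ Set.Icc (0:ℝ) 1 \ {1} := by
    intro x hx
    exact ⟨⟨(hc.1.trans hx.1).le, hx.2.le⟩, ne_of_lt hx.2⟩
  have hne : (𝓝[Set.Ioo c 1] (1:ℝ)).NeBot := right_nhdsWithin_Ioo_neBot hc1
  have hd1' : Tendsto (slope k 1) (𝓝[Set.Ioo c 1] 1) (𝓝 (k' 1)) :=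
    hd1.mono_left (nhdsWithin_mono 1 hsub)
  have hev : ∀ᶠ x in 𝓝[Set.Ioo c 1] (1:ℝ), 1 < slope k 1 x :=
    hd1'.eventually (eventually_gt_nhds hsup)
  obtain ⟨x0, hslope, hx0⟩ := (hev.and eventually_mem_nhdsWithin).exists
  have hx0lt1 : x0 < 1 := hx0.2
  have hcx0 : c < x0 := hx0.1
  have hx0mem : x0 ∈ Set.Icc (0:ℝ) 1 := (hsub hx0).1
  -- from the slope inequality: k x0 < x0
  have hkx0 : k x0 < x0 := by
    rw [slope_def_field, hk1] at hslope
    have hneg : x0 - 1 < 0 := by linarith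
    have h := (one_lt_div_of_neg hneg).mp hslope
    linarith
  -- c ≤ k c, via IVT and minimality of p
  have hckc : c ≤ k c := by
    by_contra hlt
    push_neg at hlt
    have hcmem : c ∈ Set.Icc (0:ℝ) 1 := ⟨le_of_lt hc.1, hc.2⟩
    have hIcc : Set.Icc (0:ℝ) c ⊆ Set.Icc (0:ℝ) 1 :=
      Set.Icc_subset_Icc le_rfl hc.2
    have hcont : ContinuousOn (fun x => k x - x) (Set.Icc (0:ℝ) c) :=
      (hcontk.mono hIcc).sub continuousOn_id
    have h0 : (0:ℝ) ∈ Set.Icc (k c - c) (k 0 - 0) := by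
      constructor
      · linarith
      · rw [hk0]; linarith
    obtain ⟨x1, hx1mem, hx1⟩ := intermediate_value_Icc' (le_of_lt hc.1) hcont h0
    have hx1' : k x1 - x1 = 0 := hx1
    have hx1root : k x1 = x1 := by linarith
    have hx1Icc : x1 ∈ Set.Icc (0:ℝ) 1 := hIcc hx1mem
    have hple := hpmin x1 hx1Icc hx1root
    have : x1 = c := le_antisymm hx1mem.2 (le_trans hpc hple)
    rw [this] at hx1root
    linarith
  -- 1 ≤ k' c
  have hkc1 : 1 ≤ k' c := by
    have : c * 1 ≤ c * k' c := by rw [hctan, mul_one]; exact hckc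
    exact le_of_mul_le_mul_left this hc.1
  -- slope bound: k' c ≤ slope k c x0 < 1
  have hcmem : c ∈ Set.Icc (0:ℝ) 1 := ⟨le_of_lt hc.1, hc.2⟩
  have hsl := hconv.le_slope_of_hasDerivWithinAt hcmem hx0mem hcx0 (hk' c hcmem)
  rw [slope_def_field] at hsl
  have hlt1 : (k x0 - k c) / (x0 - c) < 1 := by
    rw [div_lt_one (by linarith)]
    linarith
  linarith
end
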